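/- arXiv:1502.06948 — 10 statements merged into one kernel-verified Lean document; each statement's English description precedes it below -/
import Mathlib

section
/- Every finite chordal graph on at least one vertex has a simplicial vertex, i.e., a vertex whose neighbourhood induces a complete graph. -/
open SimpleGraph

/-- `H` occurs as an induced subgraph of `G` iff there is a graph embedding `H ↪g G`.
`Free H G` means `G` has no induced subgraph isomorphic to `H`. -/
def Free {α β : Type*} (H : SimpleGraph α) (G : SimpleGraph β) : Prop :=
  IsEmpty (H ↪g G)

/-- A graph is chordal if it has no induced cycle of length at least `4`. -/
def Chordal {V : Type*} (G : SimpleGraph V) : Prop :=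
  ∀ n : ℕ, 4 ≤ n → _root_.Free (cycleGraph n) G

/-- A set is independent if no two of its vertices are adjacent. -/
def IsIndepSet {V : Type*} (G : SimpleGraph V) (s : Set V) : Prop :=
  s.Pairwise fun u v => ¬ G.Adj u v

/-- `2P2`: the disjoint union of two edges. -/
def twoP2 : SimpleGraph (Fin 4) :=
  SimpleGraph.fromRel fun a b => (a = 0 ∧ b = 1) ∨ (a = 2 ∧ b = 3)

/-- The paw: a triangle `0,1,2` with a pendant vertex `3` adjacent to `2`. -/
def paw : SimpleGraph (Fin 4) :=
  SimpleGraph.fromRel fun a b =>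
    (a = 0 ∧ b = 1) ∨ (a = 0 ∧ b = 2) ∨ (a = 1 ∧ b = 2) ∨ (a = 2 ∧ b = 3)

/-- `P1 + paw`: an isolated vertex `0` together with a paw on `1,2,3,4`. -/
def p1Paw : SimpleGraph (Fin 5) :=
  SimpleGraph.fromRel fun a b =>
    (a = 1 ∧ b = 2) ∨ (a = 1 ∧ b = 3) ∨ (a = 2 ∧ b = 3) ∨ (a = 3 ∧ b = 4)

/-- `2P1 + P3`: two isolated vertices `0,1` and a path `2-3-4`. -/
def twoP1P3 : SimpleGraph (Fin 5) :=
  SimpleGraph.fromRel fun a b => (a = 2 ∧ b = 3) ∨ (a = 3 ∧ b = 4)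

/-- The chair `S_{1,1,2}`: centre `0` with leaves `1,2` and pendant path `0-3-4`. -/
def chair : SimpleGraph (Fin 5) :=
  SimpleGraph.fromRel fun a b =>
    (a = 0 ∧ b = 1) ∨ (a = 0 ∧ b = 2) ∨ (a = 0 ∧ b = 3) ∨ (a = 3 ∧ b = 4)

/-- `P1 + diamond`: an isolated vertex `0` and a diamond (`K4` minus the edge `3-4`)
on `1,2,3,4`. -/
def p1Diamond : SimpleGraph (Fin 5) :=
  SimpleGraph.fromRel fun a b =>
    (a = 1 ∧ b = 2) ∨ (a = 1 ∧ b = 3) ∨ (a = 1 ∧ b = 4) ∨ (a = 2 ∧ b = 3) ∨ (a = 2 ∧ b = 4)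

/-- `P2 + P4`: an edge `0-1` and a path `2-3-4-5`. -/
def p2P4 : SimpleGraph (Fin 6) :=
  SimpleGraph.fromRel fun a b =>
    (a = 0 ∧ b = 1) ∨ (a = 2 ∧ b = 3) ∨ (a = 3 ∧ b = 4) ∨ (a = 4 ∧ b = 5)

/-- `S_{1,2,3}`: centre `0` with pendant paths `0-1`, `0-2-3` and `0-4-5-6`. -/
def s123 : SimpleGraph (Fin 7) :=
  SimpleGraph.fromRel fun a b =>
    (a = 0 ∧ b = 1) ∨ (a = 0 ∧ b = 2) ∨ (a = 2 ∧ b = 3) ∨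
    (a = 0 ∧ b = 4) ∨ (a = 4 ∧ b = 5) ∨ (a = 5 ∧ b = 6)

/-- A complete split graph: a clique `K` complete to an independent set `I`,
together covering all vertices. -/
def IsCompleteSplit {V : Type*} (G : SimpleGraph V) : Prop :=
  ∃ K I : Set V, (∀ v, v ∈ K ∨ v ∈ I) ∧ (∀ v, ¬ (v ∈ K ∧ v ∈ I)) ∧
    G.IsClique K ∧ _root_.IsIndepSet G I ∧ ∀ k ∈ K, ∀ i ∈ I, G.Adj k i

namespace ChordalAux

variable {V : Type*} (G : SimpleGraph V)

/-- reachability inside a finite set `t` -/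
def reach (t : Finset V) (u v : V) : Prop :=
  Relation.ReflTransGen (fun x y => G.Adj x y ∧ x ∈ t ∧ y ∈ t) u v

variable {G}

lemma reach_symm {t : Finset V} {u v : V} (h : reach G t u v) : reach G t v u :=
  (@Relation.ReflTransGen.symmetric _ _
    ⟨fun _ _ h => ⟨h.1.symm, h.2.2, h.2.1⟩⟩).symm _ _ h

lemma reach_trans {t : Finset V} {u v w : V} (h : reach G t u v) (h' : reach G t v w) :
    reach G t u w := h.trans h'

/-- A walk from `x` to `y` of length `k` whose interior vertices lie in `T`. -/
def IsPathOn (G : SimpleGraph V) (T : Finset V) (x y : V) (k : ℕ) (f : ℕ → V) : Prop :=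
  f 0 = x ∧ f k = y ∧ (∀ i, i < k → G.Adj (f i) (f (i + 1))) ∧
    (∀ i, 0 < i → i < k → f i ∈ T)

lemma reach_to_fun {t : Finset V} {u v : V} (h : reach G t u v) (hu : u ∈ t) :
    ∃ (k : ℕ) (f : ℕ → V), f 0 = u ∧ f k = v ∧ (∀ i, i < k → G.Adj (f i) (f (i + 1))) ∧
      (∀ i, i ≤ k → f i ∈ t) := by
  induction h with
  | refl => exact ⟨0, fun _ => u, rfl, rfl, fun i hi => absurd hi (by omega), fun i hi => by
      interval_cases i; exact hu⟩
  | tail _ hstep ih =>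
    obtain ⟨k, f, h0, hk, hadj, hmem⟩ := ih
    rename_i y z _
    refine ⟨k + 1, fun i => if i ≤ k then f i else z, by simp [h0], by simp, ?_, ?_⟩
    · intro i hi
      by_cases hik : i + 1 ≤ k
      · simpa [hik, (show i ≤ k by omega)] using hadj i (by omega)
      · have : i = k := by omega
        subst this
        simpa [hk] using hstep.1
    · intro i hi
      by_cases hik : i ≤ k
      · simpa [hik] using hmem i hik
      · simpa [hik] using hstep.2.2

lemma shortcut {T : Finset V} {x y : V} {k : ℕ} {f : ℕ → V}
    (hp : IsPathOn G T x y k f) {i e : ℕ} (he : 0 < e) (hik : i + e < k)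
    (hadj : G.Adj (f i) (f (i + e + 1))) :
    IsPathOn G T x y (k - e) (fun m => if m ≤ i then f m else f (m + e)) := by
  obtain ⟨h0, hk, hstep, hmem⟩ := hp
  refine ⟨by simpa using h0, ?_, ?_, ?_⟩
  · have h1 : ¬ (k - e ≤ i) := by omega
    have h2 : k - e + e = k := by omega
    simp [h1, h2, hk]
  · intro m hm
    rcases lt_trichotomy m i with h | h | h
    · have : m + 1 ≤ i := by omega
      simp only [(show m ≤ i by omega), this, if_pos]
      simpa using hstep m (by omega)
    · subst h
      have h1 : ¬ (m + 1 ≤ m) := by omega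
      simp only [le_refl, if_pos, h1, if_neg]
      have : m + 1 + e = m + e + 1 := by omega
      rw [this]; exact hadj
    · have h1 : ¬ (m ≤ i) := by omega
      have h2 : ¬ (m + 1 ≤ i) := by omega
      simp only [h1, h2, if_neg]
      have h3 : m + 1 + e = (m + e) + 1 := by omega
      rw [h3]
      exact hstep (m + e) (by omega)
  · intro m hm0 hmk
    by_cases hmi : m ≤ i
    · simp only [hmi, if_pos]
      exact hmem m hm0 (by omega)
    · simp only [hmi, if_neg]
      exact hmem (m + e) (by omega) (by omega)

/-- Minimal-length walks are induced paths. -/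
lemma exists_minPath {T : Finset V} {x y : V}
    (h : ∃ k f, IsPathOn G T x y k f) :
    ∃ k f, IsPathOn G T x y k f ∧
      (∀ i j, i < j → j ≤ k → j ≠ i + 1 → ¬ G.Adj (f i) (f j)) ∧
      (∀ i j, i < j → j ≤ k → f i ≠ f j) := by
  classical
  have hex : ∃ k, ∃ f, IsPathOn G T x y k f := h
  set k := Nat.find hex with hkdef
  obtain ⟨f, hf⟩ := Nat.find_spec hex
  refine ⟨k, f, hf, ?_, ?_⟩
  · intro i j hij hjk hne hadj
    have he : 0 < j - i - 1 := by omega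
    have hik : i + (j - i - 1) < k := by omega
    have : i + (j - i - 1) + 1 = j := by omega
    have hsc := shortcut hf he hik (by rw [this]; exact hadj)
    exact Nat.find_min hex (by omega : k - (j - i - 1) < k) ⟨_, hsc⟩
  · intro i j hij hjk heq
    by_cases hjk' : j = k
    · subst hjk'
      have : IsPathOn G T x y i f :=
        ⟨hf.1, by rw [heq]; exact hf.2.1, fun m hm => hf.2.2.1 m (by omega),
          fun m hm0 hmk => hf.2.2.2 m hm0 (by omega)⟩
      exact absurd (Nat.find_min hex (by omega : i < k) ⟨f, this⟩) (fun h => h)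
    · have he : 0 < j - i := by omega
      have hik : i + (j - i) < k := by omega
      have h1 : i + (j - i) = j := by omega
      have hadj : G.Adj (f i) (f (i + (j - i) + 1)) := by
        rw [h1, heq]; exact hf.2.2.1 j (by omega)
      have hsc := shortcut hf he hik hadj
      exact absurd (Nat.find_min hex (by omega : k - (j - i) < k) ⟨_, hsc⟩) (fun h => h)


lemma fin_sub_val_one {n : ℕ} (hn : 2 ≤ n) (u v : Fin n) :
    (u - v).val = 1 ↔ (u.val = v.val + 1 ∨ (u.val = 0 ∧ v.val = n - 1)) := by
  have hu := u.isLt; have hv := v.isLt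
  rw [Fin.sub_def]
  simp only
  rcases le_or_gt v.val u.val with h | h
  · have h1 : n - v.val + u.val = n + (u.val - v.val) := by omega
    rw [h1, Nat.add_mod_left, Nat.mod_eq_of_lt (by omega)]
    omega
  · rw [Nat.mod_eq_of_lt (by omega)]
    omega

lemma cyc_adj_iff {n : ℕ} (hn : 4 ≤ n) (i j : Fin n) :
    (cycleGraph n).Adj i j ↔
      ((j.val = i.val + 1 ∨ (j.val = 0 ∧ i.val = n - 1)) ∨
       (i.val = j.val + 1 ∨ (i.val = 0 ∧ j.val = n - 1))) := by
  rw [SimpleGraph.cycleGraph_adj', fin_sub_val_one (by omega), fin_sub_val_one (by omega)]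
  tauto

/-- a chordless cycle contradicts chordality. -/
lemma cycle_emb {G : SimpleGraph V} (hG : Chordal G) {n : ℕ} (hn : 4 ≤ n) (g : ℕ → V)
    (hinj : ∀ i j, i < j → j < n → g i ≠ g j)
    (hadj : ∀ i, i + 1 < n → G.Adj (g i) (g (i + 1)))
    (hwrap : G.Adj (g (n - 1)) (g 0))
    (hchord : ∀ i j, i < j → j < n → j ≠ i + 1 → ¬(i = 0 ∧ j = n - 1) →
      ¬ G.Adj (g i) (g j)) : False := by
  have key : ∀ i j : Fin n, i.val < j.val →
      (G.Adj (g i.val) (g j.val) ↔ (cycleGraph n).Adj i j) := by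
    intro i j hij
    rw [cyc_adj_iff hn]
    have hi := i.isLt; have hj := j.isLt
    constructor
    · intro hadj'
      by_contra hc
      exact hchord i.val j.val hij hj (fun h => hc (Or.inl (Or.inl h)))
        (fun h => hc (Or.inr (Or.inr ⟨h.1, h.2⟩))) hadj'
    · rintro ((h | ⟨h0, h1⟩) | (h | ⟨h0, h1⟩))
      · rw [h]; exact hadj i.val (by omega)
      · omega
      · omega
      · rw [h0, h1]; exact hwrap.symm
  have inj : Function.Injective (fun i : Fin n => g i.val) := by
    intro i j hij
    simp only at hij
    by_contra hne
    rcases lt_or_gt_of_ne (fun h : i.val = j.val => hne (Fin.ext h)) with h | h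
    · exact hinj i.val j.val h j.isLt hij
    · exact hinj j.val i.val h i.isLt hij.symm
  have memb : (cycleGraph n) ↪g G := by
    refine ⟨⟨fun i => g i.val, inj⟩, ?_⟩
    intro i j
    simp only [Function.Embedding.coeFn_mk]
    rcases lt_trichotomy i.val j.val with h | h | h
    · exact key i j h
    · constructor
      · intro hadj'; exact absurd hadj' (by rw [Fin.ext h]; exact G.irrefl)
      · intro hadj'; exact absurd hadj' (by rw [Fin.ext h]; exact (cycleGraph n).irrefl)
    · exact ⟨fun h' => ((key j i h).mp h'.symm).symm,
        fun h' => ((key j i h).mpr h'.symm).symm⟩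
  exact (hG n hn).false memb


lemma exists_good_path {G : SimpleGraph V} {T : Finset V} {x y ax ay : V}
    (hxy : ¬ G.Adj x y) (hne : x ≠ y) (hax : G.Adj x ax) (hay : G.Adj y ay)
    (haxT : ax ∈ T) (hreach : reach G T ax ay) :
    ∃ (k : ℕ) (f : ℕ → V), IsPathOn G T x y k f ∧ 2 ≤ k ∧
      (∀ i j, i < j → j ≤ k → j ≠ i + 1 → ¬ G.Adj (f i) (f j)) ∧
      (∀ i j, i < j → j ≤ k → f i ≠ f j) := by
  obtain ⟨k0, f0, h0, hk0, hadj0, hmem0⟩ := reach_to_fun hreach haxT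
  have hex : ∃ (k : ℕ) (f : ℕ → V), IsPathOn G T x y k f := by
    refine ⟨k0 + 2, fun i => if i = 0 then x else if i ≤ k0 + 1 then f0 (i - 1) else y,
      by simp, ?_, ?_, ?_⟩
    · simp [show ¬ (k0 + 2 ≤ k0 + 1) by omega]
    · intro i hi
      rcases Nat.eq_zero_or_pos i with h | h
      · subst h
        simpa [h0] using hax
      · by_cases h1 : i ≤ k0
        · have e1 : ¬ (i + 1 = 0) := by omega
          have e2 : i + 1 ≤ k0 + 1 := by omega
          have e3 : ¬ (i = 0) := by omega
          have e4 : i ≤ k0 + 1 := by omega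
          simp only [e1, e2, e3, e4, if_neg, if_pos]
          have : i + 1 - 1 = (i - 1) + 1 := by omega
          rw [this]
          exact hadj0 (i - 1) (by omega)
        · have h2 : i = k0 + 1 := by omega
          subst h2
          have e1 : ¬ (k0 + 1 = 0) := by omega
          have e2 : ¬ (k0 + 1 + 1 ≤ k0 + 1) := by omega
          have e3 : ¬ (k0 + 1 + 1 = 0) := by omega
          simp only [e1, e2, e3, if_neg, if_pos, le_refl]
          simpa [hk0] using hay.symm
    · intro i hi0 hik
      have e1 : ¬ (i = 0) := by omega
      have e2 : i ≤ k0 + 1 := by omega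
      simp only [e1, e2, if_neg, if_pos]
      exact hmem0 (i - 1) (by omega)
  obtain ⟨k, f, hf, hchord, hinj⟩ := exists_minPath hex
  refine ⟨k, f, hf, ?_, hchord, hinj⟩
  by_contra h
  interval_cases k
  · exact hne (hf.1.symm.trans hf.2.1)
  · exact hxy (by rw [← hf.1, ← hf.2.1]; exact hf.2.2.1 0 (by omega))


def Sep [DecidableEq V] (G : SimpleGraph V) (s : Finset V) (a b : V) (T : Finset V) : Prop :=
  T ⊆ s ∧ a ∉ T ∧ b ∉ T ∧ ¬ reach G (s \ T) a b

lemma sep_symm [DecidableEq V] {G : SimpleGraph V} {s T : Finset V} {a b : V} (h : Sep G s a b T) :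
    Sep G s b a T :=
  ⟨h.1, h.2.2.1, h.2.1, fun hr => h.2.2.2 (reach_symm hr)⟩

lemma sep_exists {G : SimpleGraph V} [DecidableEq V] {s : Finset V} {a b : V}
    (hne : a ≠ b) (hnadj : ¬ G.Adj a b) : Sep G s a b (s \ {a, b}) := by
  refine ⟨Finset.sdiff_subset, by simp, by simp, ?_⟩
  intro hr
  have claim : ∀ z, reach G (s \ (s \ {a, b})) a z → z = a := by
    intro z hz
    induction hz with
    | refl => rfl
    | @tail y z hpre hstep ih =>
      obtain ⟨hadj, -, hz2⟩ := hstep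
      rw [ih] at hadj
      rw [Finset.mem_sdiff, Finset.mem_sdiff] at hz2
      have hz4 : z ∈ ({a, b} : Finset V) := by tauto
      rcases Finset.mem_insert.mp hz4 with h | h
      · exact absurd (h ▸ hadj) G.irrefl
      · rw [Finset.mem_singleton] at h
        exact absurd (h ▸ hadj) hnadj
  exact hne (claim b hr).symm

lemma sep_neighbor {G : SimpleGraph V} [DecidableEq V] {s S : Finset V} {a b c : V}
    (ha : a ∈ s) (haS : a ∉ S)
    (hS : Sep G s a b S) (hmin : ∀ T, Sep G s a b T → S.card ≤ T.card) (hc : c ∈ S) :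
    ∃ z, z ∈ s \ S ∧ reach G (s \ S) a z ∧ G.Adj c z := by
  by_contra h
  push_neg at h
  have hSep' : Sep G s a b (S.erase c) := by
    refine ⟨(Finset.erase_subset _ _).trans hS.1, fun h' => hS.2.1 (Finset.mem_of_mem_erase h'),
      fun h' => hS.2.2.1 (Finset.mem_of_mem_erase h'), ?_⟩
    intro hr
    have claim : ∀ z, reach G (s \ S.erase c) a z → z ∈ s \ S ∧ reach G (s \ S) a z := by
      intro z hz
      induction hz with
      | refl => exact ⟨Finset.mem_sdiff.mpr ⟨ha, haS⟩, Relation.ReflTransGen.refl⟩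
      | @tail y z' hpre hstep ih =>
        obtain ⟨hadj, -, hz2⟩ := hstep
        by_cases hzc : z' = c
        · subst hzc
          exact absurd hadj.symm (h y ih.1 ih.2)
        · have hz3 : z' ∈ s \ S := by
            rw [Finset.mem_sdiff] at hz2 ⊢
            refine ⟨hz2.1, fun hmem => hz2.2 (Finset.mem_erase.mpr ⟨hzc, hmem⟩)⟩
          exact ⟨hz3, ih.2.tail ⟨hadj, ih.1, hz3⟩⟩
    exact hS.2.2.2 (claim b hr).2
  have h1 := hmin _ hSep'
  have h2 : (S.erase c).card < S.card := Finset.card_erase_lt_of_mem hc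
  omega

lemma reach_restrict {G : SimpleGraph V} {t A : Finset V} {a z : V} (ha : a ∈ t)
    (hA : ∀ w, w ∈ A ↔ w ∈ t ∧ reach G t a w) (hz : reach G t a z) : reach G A a z := by
  induction hz with
  | refl => exact Relation.ReflTransGen.refl
  | tail hpre hstep ih =>
    exact ih.tail ⟨hstep.1, (hA _).mpr ⟨hstep.2.1, hpre⟩,
      (hA _).mpr ⟨hstep.2.2, hpre.tail hstep⟩⟩


def SimpOn (G : SimpleGraph V) (s : Finset V) (v : V) : Prop :=
  ∀ p ∈ s, ∀ q ∈ s, G.Adj v p → G.Adj v q → p ≠ q → G.Adj p q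

def Conc (G : SimpleGraph V) (s : Finset V) : Prop :=
  (∀ x ∈ s, ∀ y ∈ s, x ≠ y → G.Adj x y) ∨
  ∃ x ∈ s, ∃ y ∈ s, x ≠ y ∧ ¬ G.Adj x y ∧ SimpOn G s x ∧ SimpOn G s y

lemma sep_clique [DecidableEq V] {G : SimpleGraph V} (hG : Chordal G) {s S : Finset V}
    {a b : V} (ha : a ∈ s) (hb : b ∈ s) (hne : a ≠ b) (hnadj : ¬ G.Adj a b)
    (hS : Sep G s a b S) (hmin : ∀ T, Sep G s a b T → S.card ≤ T.card) :
    ∀ x ∈ S, ∀ y ∈ S, x ≠ y → G.Adj x y := by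
  classical
  by_contra h
  push_neg at h
  obtain ⟨x, hx, y, hy, hxy, hnxy⟩ := h
  set A := (s \ S).filter (fun z => reach G (s \ S) a z) with hA
  set B := (s \ S).filter (fun z => reach G (s \ S) b z) with hB
  have hAmem : ∀ w, w ∈ A ↔ w ∈ s \ S ∧ reach G (s \ S) a w := by
    intro w; simp [hA, Finset.mem_filter]
  have hBmem : ∀ w, w ∈ B ↔ w ∈ s \ S ∧ reach G (s \ S) b w := by
    intro w; simp [hB, Finset.mem_filter]
  have haA : a ∈ s \ S := Finset.mem_sdiff.mpr ⟨ha, hS.2.1⟩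
  have hbB : b ∈ s \ S := Finset.mem_sdiff.mpr ⟨hb, hS.2.2.1⟩
  have hABdisj : ∀ z, z ∈ A → z ∈ B → False := by
    intro z hzA hzB
    exact hS.2.2.2 (((hAmem z).mp hzA).2.trans (reach_symm ((hBmem z).mp hzB).2))
  have hABadj : ∀ z w, z ∈ A → w ∈ B → ¬ G.Adj z w := by
    intro z w hzA hwB hadj
    refine hABdisj w ((hAmem w).mpr ⟨((hBmem w).mp hwB).1, ?_⟩) hwB
    exact ((hAmem z).mp hzA).2.tail ⟨hadj, ((hAmem z).mp hzA).1, ((hBmem w).mp hwB).1⟩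
  have hxA : x ∉ A := fun h' => (Finset.mem_sdiff.mp ((hAmem x).mp h').1).2 hx
  have hyA : y ∉ A := fun h' => (Finset.mem_sdiff.mp ((hAmem y).mp h').1).2 hy
  have hxB : x ∉ B := fun h' => (Finset.mem_sdiff.mp ((hBmem x).mp h').1).2 hx
  have hyB : y ∉ B := fun h' => (Finset.mem_sdiff.mp ((hBmem y).mp h').1).2 hy
  obtain ⟨ax, haxm, haxR, haxadj⟩ := sep_neighbor ha hS.2.1 hS hmin hx
  obtain ⟨ay, haym, hayR, hayadj⟩ := sep_neighbor ha hS.2.1 hS hmin hy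
  have hmin2 : ∀ T, Sep G s b a T → S.card ≤ T.card := fun T hT => hmin T (sep_symm hT)
  obtain ⟨bx, hbxm, hbxR, hbxadj⟩ := sep_neighbor hb hS.2.2.1 (sep_symm hS) hmin2 hx
  obtain ⟨by', hbym, hbyR, hbyadj⟩ := sep_neighbor hb hS.2.2.1 (sep_symm hS) hmin2 hy
  have haxA : ax ∈ A := (hAmem ax).mpr ⟨haxm, haxR⟩
  have hreachA : reach G A ax ay :=
    (reach_symm (reach_restrict haA hAmem haxR)).trans (reach_restrict haA hAmem hayR)
  have hbxB : bx ∈ B := (hBmem bx).mpr ⟨hbxm, hbxR⟩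
  have hreachB : reach G B bx by' :=
    (reach_symm (reach_restrict hbB hBmem hbxR)).trans (reach_restrict hbB hBmem hbyR)
  obtain ⟨kA, fA, hPA, hkA2, hchA, hinjA⟩ :=
    exists_good_path hnxy hxy haxadj hayadj haxA hreachA
  obtain ⟨kB, fB, hPB, hkB2, hchB, hinjB⟩ :=
    exists_good_path hnxy hxy hbxadj hbyadj hbxB hreachB
  set n := kA + kB with hn
  set g : ℕ → V := fun i => if i ≤ kA then fA i else fB (n - i) with hg
  have hg_le : ∀ i, i ≤ kA → g i = fA i := by intro i h'; simp [hg, h']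
  have hg_gt : ∀ i, kA < i → g i = fB (n - i) := by
    intro i h'
    simp only [hg]
    rw [if_neg (by omega : ¬ i ≤ kA)]
  refine cycle_emb hG (by omega : 4 ≤ n) g ?_ ?_ ?_ ?_
  · -- injectivity
    intro i j hij hjn heq
    by_cases hjA : j ≤ kA
    · rw [hg_le i (by omega), hg_le j hjA] at heq
      exact hinjA i j hij (by omega) heq
    · by_cases hiA : i ≤ kA
      · rw [hg_le i hiA, hg_gt j (by omega)] at heq
        have hm1 : 0 < n - j := by omega
        have hm2 : n - j < kB := by omega
        have hBm : fB (n - j) ∈ B := hPB.2.2.2 _ hm1 hm2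
        rcases Nat.eq_zero_or_pos i with h0 | h0
        · subst h0
          rw [hPA.1] at heq
          exact hxB (heq ▸ hBm)
        · by_cases hik : i = kA
          · subst hik
            rw [hPA.2.1] at heq
            exact hyB (heq ▸ hBm)
          · exact hABdisj (fA i) (hPA.2.2.2 i h0 (by omega)) (heq ▸ hBm)
      · rw [hg_gt i (by omega), hg_gt j (by omega)] at heq
        exact hinjB (n - j) (n - i) (by omega) (by omega) heq.symm
  · -- adjacency
    intro i hi
    by_cases h1 : i + 1 ≤ kA
    · rw [hg_le i (by omega), hg_le (i + 1) h1]
      exact hPA.2.2.1 i (by omega)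
    · by_cases h2 : i ≤ kA
      · have hik : i = kA := by omega
        subst hik
        rw [hg_le i le_rfl, hg_gt (i + 1) (by omega), hPA.2.1]
        have e : n - (i + 1) = kB - 1 := by omega
        rw [e]
        have hstep := hPB.2.2.1 (kB - 1) (by omega)
        rw [(by omega : kB - 1 + 1 = kB), hPB.2.1] at hstep
        exact hstep.symm
      · rw [hg_gt i (by omega), hg_gt (i + 1) (by omega)]
        have hstep := hPB.2.2.1 (n - (i + 1)) (by omega)
        rw [(by omega : n - (i + 1) + 1 = n - i)] at hstep
        exact hstep.symm
  · -- wrap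
    rw [hg_gt (n - 1) (by omega), hg_le 0 (by omega), hPA.1, ← hPB.1,
      (by omega : n - (n - 1) = 1)]
    exact (hPB.2.2.1 0 (by omega)).symm
  · -- chords
    intro i j hij hjn hne1 hne2 hadj'
    by_cases hjA : j ≤ kA
    · rw [hg_le i (by omega), hg_le j hjA] at hadj'
      exact hchA i j hij (by omega) hne1 hadj'
    · by_cases hiA : i ≤ kA
      · rw [hg_le i hiA, hg_gt j (by omega)] at hadj'
        have hm1 : 0 < n - j := by omega
        have hm2 : n - j < kB := by omega
        rcases Nat.eq_zero_or_pos i with h0 | h0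
        · subst h0
          rw [hPA.1, ← hPB.1] at hadj'
          refine hchB 0 (n - j) hm1 (by omega) ?_ hadj'
          intro hc
          exact hne2 ⟨rfl, by omega⟩
        · by_cases hik : i = kA
          · subst hik
            rw [hPA.2.1, ← hPB.2.1] at hadj'
            refine hchB (n - j) kB hm2 le_rfl ?_ hadj'.symm
            intro hc
            exact hne1 (by omega)
          · exact hABadj (fA i) (fB (n - j)) (hPA.2.2.2 i h0 (by omega))
              (hPB.2.2.2 _ hm1 hm2) hadj'
      · rw [hg_gt i (by omega), hg_gt j (by omega)] at hadj'
        exact hchB (n - j) (n - i) (by omega) (by omega) (by omega) hadj'.symm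


lemma side [DecidableEq V] {G : SimpleGraph V} {s S : Finset V} {a b : V}
    (ha : a ∈ s) (hb : b ∈ s)
    (hS : Sep G s a b S)
    (hScl : ∀ x ∈ S, ∀ y ∈ S, x ≠ y → G.Adj x y)
    (ih : ∀ t, t ⊂ s → t.Nonempty → Conc G t) :
    ∃ x, x ∈ s ∧ x ∉ S ∧ reach G (s \ S) a x ∧ SimpOn G s x := by
  classical
  set A := (s \ S).filter (fun z => reach G (s \ S) a z) with hA
  have hAmem : ∀ w, w ∈ A ↔ w ∈ s \ S ∧ reach G (s \ S) a w := by
    intro w; simp [hA, Finset.mem_filter]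
  have haA : a ∈ A := (hAmem a).mpr ⟨Finset.mem_sdiff.mpr ⟨ha, hS.2.1⟩,
    Relation.ReflTransGen.refl⟩
  have hsub : A ∪ S ⊆ s := Finset.union_subset
    (fun w hw => (Finset.mem_sdiff.mp ((hAmem w).mp hw).1).1) hS.1
  have hbA : b ∉ A := fun h' => hS.2.2.2 ((hAmem b).mp h').2
  have hssub : A ∪ S ⊂ s := (Finset.ssubset_iff_of_subset hsub).mpr
    ⟨b, hb, by simp [hbA, hS.2.2.1]⟩
  have hclose : ∀ x ∈ A, ∀ z ∈ s, G.Adj x z → z ∈ A ∪ S := by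
    intro x hxA z hz hadj
    by_cases hzS : z ∈ S
    · exact Finset.mem_union_right _ hzS
    · refine Finset.mem_union_left _ ((hAmem z).mpr ⟨Finset.mem_sdiff.mpr ⟨hz, hzS⟩, ?_⟩)
      exact ((hAmem x).mp hxA).2.tail ⟨hadj, ((hAmem x).mp hxA).1,
        Finset.mem_sdiff.mpr ⟨hz, hzS⟩⟩
  have hgot : ∃ x ∈ A, SimpOn G (A ∪ S) x := by
    rcases ih (A ∪ S) hssub ⟨a, Finset.mem_union_left _ haA⟩ with hcl |
      ⟨u, hu, v, hv, huv, hnuv, hsu, hsv⟩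
    · exact ⟨a, haA, fun p hp q hq _ _ hpq => hcl p hp q hq hpq⟩
    · by_cases huA : u ∈ A
      · exact ⟨u, huA, hsu⟩
      · by_cases hvA : v ∈ A
        · exact ⟨v, hvA, hsv⟩
        · have huS : u ∈ S := (Finset.mem_union.mp hu).resolve_left huA
          have hvS : v ∈ S := (Finset.mem_union.mp hv).resolve_left hvA
          exact absurd (hScl u huS v hvS huv) hnuv
  obtain ⟨x, hxA, hxSimp⟩ := hgot
  have hxm := Finset.mem_sdiff.mp ((hAmem x).mp hxA).1
  refine ⟨x, hxm.1, hxm.2, ((hAmem x).mp hxA).2, ?_⟩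
  intro p hp q hq hadj1 hadj2 hpq
  exact hxSimp p (hclose x hxA p hp hadj1) q (hclose x hxA q hq hadj2) hadj1 hadj2 hpq

lemma key {G : SimpleGraph V} (hG : Chordal G) :
    ∀ s : Finset V, s.Nonempty → Conc G s := by
  classical
  intro s
  induction s using Finset.strongInduction with
  | _ s ih =>
    intro hs
    by_cases hcl : ∀ x ∈ s, ∀ y ∈ s, x ≠ y → G.Adj x y
    · exact Or.inl hcl
    · push_neg at hcl
      obtain ⟨a, ha, b, hb, hne, hnadj⟩ := hcl
      obtain ⟨S, hSmem, hSmin⟩ := Finset.exists_min_image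
        ((s.powerset).filter (fun T => Sep G s a b T)) Finset.card
        ⟨s \ {a, b}, Finset.mem_filter.mpr ⟨Finset.mem_powerset.mpr Finset.sdiff_subset,
          sep_exists hne hnadj⟩⟩
      have hS : Sep G s a b S := (Finset.mem_filter.mp hSmem).2
      have hmin : ∀ T, Sep G s a b T → S.card ≤ T.card := fun T hT =>
        hSmin T (Finset.mem_filter.mpr ⟨Finset.mem_powerset.mpr hT.1, hT⟩)
      have hScl := sep_clique hG ha hb hne hnadj hS hmin
      have ih' : ∀ t, t ⊂ s → t.Nonempty → Conc G t := fun t h1 h2 => ih t h1 h2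
      obtain ⟨x, hxs, hxS, hxR, hxSimp⟩ := side ha hb hS hScl ih'
      obtain ⟨y, hys, hyS, hyR, hySimp⟩ := side hb ha (sep_symm hS) hScl ih'
      refine Or.inr ⟨x, hxs, y, hys, ?_, ?_, hxSimp, hySimp⟩
      · intro heq
        exact hS.2.2.2 ((heq ▸ hxR).trans (reach_symm hyR))
      · intro hadj
        have h1 : reach G (s \ S) a y := hxR.tail
          ⟨hadj, Finset.mem_sdiff.mpr ⟨hxs, hxS⟩, Finset.mem_sdiff.mpr ⟨hys, hyS⟩⟩
        exact hS.2.2.2 (h1.trans (reach_symm hyR))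

end ChordalAux

/-- Every finite chordal graph on at least one vertex has a simplicial vertex. -/
theorem chordal_exists_simplicial {V : Type*} [Fintype V] [Nonempty V]
    (G : SimpleGraph V) (hG : Chordal G) :
    ∃ v : V, ∀ a ∈ G.neighborSet v, ∀ b ∈ G.neighborSet v, a ≠ b → G.Adj a b := by
  classical
  rcases ChordalAux.key hG Finset.univ Finset.univ_nonempty with hcl |
    ⟨x, -, y, -, -, -, hxSimp, -⟩
  · obtain ⟨v⟩ := (inferInstance : Nonempty V)
    exact ⟨v, fun p hp q hq hpq => hcl p (Finset.mem_univ p) q (Finset.mem_univ q) hpq⟩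
  · exact ⟨x, fun p hp q hq hpq =>
      hxSimp p (Finset.mem_univ p) q (Finset.mem_univ q) hp hq hpq⟩
end

section
/- A finite graph is a split graph (its vertex set can be partitioned into a clique and an independent set) if and only if it has no induced subgraph isomorphic to C4, C5, or 2P2. -/
open SimpleGraph

instance : DecidableRel twoP2.Adj := fun a b =>
  decidable_of_iff _ (SimpleGraph.fromRel_adj _ a b).symm

section SplitHelpers

variable {V : Type*} {G : SimpleGraph V}

/-- Build a graph embedding from an explicit vertex list. -/
def Split.buildEmb {n : ℕ} {H : SimpleGraph (Fin n)} (f : Fin n → V)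
    (hinj : Function.Injective f)
    (hrel : ∀ i j, G.Adj (f i) (f j) ↔ H.Adj i j) : H ↪g G :=
  ⟨⟨f, hinj⟩, hrel _ _⟩

lemma Split.no2P2 (h : _root_.Free twoP2 G) {a b c d : V} (hab : G.Adj a b) (hcd : G.Adj c d)
    (hac : ¬G.Adj a c) (had : ¬G.Adj a d) (hbc : ¬G.Adj b c) (hbd : ¬G.Adj b d) : False := by
  have nac : a ≠ c := fun h' => had (h' ▸ hcd)
  have nad : a ≠ d := fun h' => hac (h' ▸ hcd.symm)
  have nbc : b ≠ c := fun h' => hbd (h' ▸ hcd)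
  have nbd : b ≠ d := fun h' => hbc (h' ▸ hcd.symm)
  have nab : a ≠ b := hab.ne
  have ncd : c ≠ d := hcd.ne
  refine h.elim (Split.buildEmb ![a,b,c,d] ?_ ?_)
  · intro i j hij
    fin_cases i <;> fin_cases j <;>
      simp only [Matrix.cons_val_zero, Matrix.cons_val_one, Matrix.head_cons,
        Matrix.cons_val_two, Matrix.tail_cons, Matrix.cons_val_three, Fin.isValue] at hij ⊢ <;>
      first
        | rfl
        | exact absurd hij (by assumption)
        | exact absurd hij.symm (by assumption)
  · intro i j
    fin_cases i <;> fin_cases j <;>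
      simp only [Matrix.cons_val_zero, Matrix.cons_val_one, Matrix.head_cons,
        Matrix.cons_val_two, Matrix.tail_cons, Matrix.cons_val_three, Fin.isValue,
        Fin.reduceFinMk, Matrix.cons_val] <;>
      first
        | exact iff_of_false (G.loopless.irrefl _) (by decide)
        | exact iff_of_true (by assumption) (by decide)
        | exact iff_of_true (G.symm.symm _ _ (by assumption)) (by decide)
        | exact iff_of_false (by assumption) (by decide)
        | exact iff_of_false (fun h' => absurd h'.symm (by assumption)) (by decide)

lemma Split.noC4 (h : _root_.Free (cycleGraph 4) G) {a b c d : V} (eac : a ≠ c) (ebd : b ≠ d)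
    (hab : G.Adj a b) (hbc : G.Adj b c) (hcd : G.Adj c d) (hda : G.Adj d a)
    (nac : ¬G.Adj a c) (nbd : ¬G.Adj b d) : False := by
  have nab : a ≠ b := hab.ne
  have nbc : b ≠ c := hbc.ne
  have ncd : c ≠ d := hcd.ne
  have nda : d ≠ a := hda.ne
  have nad : a ≠ d := nda.symm
  refine h.elim (Split.buildEmb ![a,b,c,d] ?_ ?_)
  · intro i j hij
    fin_cases i <;> fin_cases j <;>
      simp only [Matrix.cons_val_zero, Matrix.cons_val_one, Matrix.head_cons,
        Matrix.cons_val_two, Matrix.tail_cons, Matrix.cons_val_three, Fin.isValue] at hij ⊢ <;>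
      first
        | rfl
        | exact absurd hij (by assumption)
        | exact absurd hij.symm (by assumption)
  · intro i j
    fin_cases i <;> fin_cases j <;>
      simp only [Matrix.cons_val_zero, Matrix.cons_val_one, Matrix.head_cons,
        Matrix.cons_val_two, Matrix.tail_cons, Matrix.cons_val_three, Fin.isValue,
        Fin.reduceFinMk, Matrix.cons_val] <;>
      first
        | exact iff_of_false (G.loopless.irrefl _) (by decide)
        | exact iff_of_true (by assumption) (by decide)
        | exact iff_of_true (G.symm.symm _ _ (by assumption)) (by decide)
        | exact iff_of_false (by assumption) (by decide)
        | exact iff_of_false (fun h' => absurd h'.symm (by assumption)) (by decide)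

lemma Split.noC5 (h : _root_.Free (cycleGraph 5) G) {a b c d e : V}
    (hab : G.Adj a b) (hbc : G.Adj b c) (hcd : G.Adj c d) (hde : G.Adj d e) (hea : G.Adj e a)
    (nac : ¬G.Adj a c) (nad : ¬G.Adj a d) (nbd : ¬G.Adj b d) (nbe : ¬G.Adj b e)
    (nce : ¬G.Adj c e) : False := by
  have eac : a ≠ c := fun h' => nad (h' ▸ hcd)
  have ead : a ≠ d := fun h' => nac (h' ▸ hcd.symm)
  have ebd : b ≠ d := fun h' => nbe (h' ▸ hde)
  have ebe : b ≠ e := fun h' => nbd (h' ▸ hde.symm)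
  have ece : c ≠ e := fun h' => nac (h' ▸ hea.symm)
  have nab : a ≠ b := hab.ne
  have nbc : b ≠ c := hbc.ne
  have ncd : c ≠ d := hcd.ne
  have nde : d ≠ e := hde.ne
  have nea : e ≠ a := hea.ne
  have nae : a ≠ e := nea.symm
  refine h.elim (Split.buildEmb ![a,b,c,d,e] ?_ ?_)
  · intro i j hij
    fin_cases i <;> fin_cases j <;>
      simp only [Matrix.cons_val_zero, Matrix.cons_val_one, Matrix.head_cons,
        Matrix.cons_val_two, Matrix.tail_cons, Matrix.cons_val_three,
        Matrix.cons_val_four, Fin.isValue] at hij ⊢ <;>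
      first
        | rfl
        | exact absurd hij (by assumption)
        | exact absurd hij.symm (by assumption)
  · intro i j
    fin_cases i <;> fin_cases j <;>
      simp only [Matrix.cons_val_zero, Matrix.cons_val_one, Matrix.head_cons,
        Matrix.cons_val_two, Matrix.tail_cons, Matrix.cons_val_three,
        Matrix.cons_val_four, Fin.isValue, Fin.reduceFinMk, Matrix.cons_val] <;>
      first
        | exact iff_of_false (G.loopless.irrefl _) (by decide)
        | exact iff_of_true (by assumption) (by decide)
        | exact iff_of_true (G.symm.symm _ _ (by assumption)) (by decide)
        | exact iff_of_false (by assumption) (by decide)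
        | exact iff_of_false (fun h' => absurd h'.symm (by assumption)) (by decide)

end SplitHelpers

lemma Split.sumcount {V : Type*} [Fintype V] [DecidableEq V] (G : SimpleGraph V)
    [DecidableRel G.Adj] (T : Finset V) {y : V} (hy : y ∉ T) :
    ∑ a ∈ insert y T, ((insert y T).filter (G.Adj a)).card
      = (∑ a ∈ T, (T.filter (G.Adj a)).card) + 2 * (T.filter (G.Adj y)).card := by
  rw [Finset.sum_insert hy]
  have h1 : (insert y T).filter (G.Adj y) = T.filter (G.Adj y) := by
    rw [Finset.filter_insert, if_neg (G.loopless.irrefl y)]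
  have h2 : ∀ a ∈ T, ((insert y T).filter (G.Adj a)).card
      = (T.filter (G.Adj a)).card + if G.Adj a y then 1 else 0 := by
    intro a ha
    rw [Finset.filter_insert]
    split
    · rw [Finset.card_insert_of_notMem (fun h => hy (Finset.mem_filter.1 h).1)]
    · simp
  have h4 : ∑ x ∈ T, (if G.Adj x y then 1 else 0) = (T.filter (fun a => G.Adj a y)).card := by
    rw [Finset.card_filter]
  have h3 : T.filter (fun a => G.Adj a y) = T.filter (G.Adj y) := by
    apply Finset.filter_congr; intro a _; simp [G.adj_comm]
  rw [h1, Finset.sum_congr rfl h2, Finset.sum_add_distrib, h4, h3]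
  omega

lemma Split.keyLemma {V : Type*} [Fintype V] [DecidableEq V] {G : SimpleGraph V}
    [DecidableRel G.Adj]
    (h4 : _root_.Free (cycleGraph 4) G) (h5 : _root_.Free (cycleGraph 5) G)
    (h2 : _root_.Free twoP2 G)
    (K : Finset V) (hKcl : G.IsClique (K : Set V))
    (hmax : ∀ K' : Finset V, G.IsClique (K' : Set V) → K'.card ≤ K.card)
    (hmin : ∀ K' : Finset V, G.IsClique (K' : Set V) → K'.card = K.card →
      ∑ a ∈ Kᶜ, (Kᶜ.filter (G.Adj a)).card ≤ ∑ a ∈ K'ᶜ, (K'ᶜ.filter (G.Adj a)).card)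
    {x y v : V} (hxK : x ∉ K) (hyK : y ∉ K) (hxy : G.Adj x y)
    (hvK : v ∈ K) (hvx : ¬G.Adj v x) (hvy : ¬G.Adj v y)
    (hAy : ∀ w ∈ K, w ≠ v → G.Adj w y) : False := by
  have hxyne : x ≠ y := hxy.ne
  have hvyne : v ≠ y := fun h => hyK (h ▸ hvK)
  have hvxne : v ≠ x := fun h => hxK (h ▸ hvK)
  -- step 1: find w ∈ K, w ≠ v, not adjacent to x
  obtain ⟨w, hwK, hwv, hwx⟩ : ∃ w ∈ K, w ≠ v ∧ ¬G.Adj w x := by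
    by_contra hcon
    push_neg at hcon
    set K' : Finset V := insert x (insert y (K.erase v)) with hK'
    have hxmem : x ∉ insert y (K.erase v) := by
      simp only [Finset.mem_insert, Finset.mem_erase]
      rintro (h | ⟨-, h⟩)
      · exact hxyne h
      · exact hxK h
    have hymem : y ∉ K.erase v := fun h => hyK (Finset.mem_of_mem_erase h)
    have hcl' : G.IsClique (K' : Set V) := by
      have hcl0 : G.IsClique ((K.erase v : Finset V) : Set V) :=
        hKcl.subset (by
          intro a ha
          exact Finset.mem_coe.2 (Finset.mem_of_mem_erase (Finset.mem_coe.1 ha)))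
      have hcl1 : G.IsClique ((insert y (K.erase v) : Finset V) : Set V) := by
        rw [Finset.coe_insert]
        refine hcl0.insert ?_
        intro b hb _
        exact (hAy b (Finset.mem_of_mem_erase hb) (Finset.ne_of_mem_erase hb)).symm
      rw [hK', Finset.coe_insert]
      refine hcl1.insert ?_
      intro b hb hbx
      rcases Finset.mem_insert.1 hb with h | h
      · exact h ▸ hxy
      · exact (hcon b (Finset.mem_of_mem_erase h) (Finset.ne_of_mem_erase h)).symm
    have hcard : K'.card = K.card + 1 := by
      rw [hK', Finset.card_insert_of_notMem hxmem, Finset.card_insert_of_notMem hymem,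
        Finset.card_erase_of_mem hvK]
      have : 1 ≤ K.card := Finset.card_pos.2 ⟨v, hvK⟩
      omega
    have := hmax K' hcl'
    omega
  have hwy : G.Adj w y := hAy w hwK hwv
  have hwv' : G.Adj w v := hKcl (Finset.mem_coe.2 hwK) (Finset.mem_coe.2 hvK) hwv
  have hwxne : w ≠ x := fun h => hxK (h ▸ hwK)
  have hwyne : w ≠ y := hwy.ne
  -- the swapped clique
  set K' : Finset V := insert y (K.erase v) with hK'
  have hymem : y ∉ K.erase v := fun h => hyK (Finset.mem_of_mem_erase h)
  have hcl' : G.IsClique (K' : Set V) := by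
    have hcl0 : G.IsClique ((K.erase v : Finset V) : Set V) :=
      hKcl.subset (by
        intro a ha
        exact Finset.mem_coe.2 (Finset.mem_of_mem_erase (Finset.mem_coe.1 ha)))
    rw [hK', Finset.coe_insert]
    refine hcl0.insert ?_
    intro b hb _
    exact (hAy b (Finset.mem_of_mem_erase hb) (Finset.ne_of_mem_erase hb)).symm
  have hcard : K'.card = K.card := by
    rw [hK', Finset.card_insert_of_notMem hymem, Finset.card_erase_of_mem hvK]
    have : 1 ≤ K.card := Finset.card_pos.2 ⟨v, hvK⟩
    omega
  have hle := hmin K' hcl' hcard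
  -- complements
  set T : Finset V := Kᶜ.erase y with hT
  have hyT : y ∉ T := Finset.notMem_erase _ _
  have hvT : v ∉ T := fun h => (Finset.mem_compl.1 (Finset.mem_of_mem_erase h)) hvK
  have hKc : Kᶜ = insert y T := by
    rw [hT, Finset.insert_erase (Finset.mem_compl.2 hyK)]
  have hK'c : K'ᶜ = insert v T := by
    ext a
    by_cases hav : a = v
    · subst hav
      simp only [hK', hT, Finset.mem_compl, Finset.mem_insert, Finset.mem_erase]
      simp [hvyne, hvK]
    · simp only [hK', hT, Finset.mem_compl, Finset.mem_insert, Finset.mem_erase]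
      push_neg
      constructor
      · rintro ⟨h1, h2⟩
        exact Or.inr ⟨h1, h2 hav⟩
      · rintro (rfl | ⟨h1, h2⟩)
        · exact absurd rfl hav
        · exact ⟨h1, fun _ => h2⟩
  rw [hKc, hK'c, Split.sumcount G T hyT, Split.sumcount G T hvT] at hle
  have hcyv : (T.filter (G.Adj y)).card ≤ (T.filter (G.Adj v)).card := by omega
  have hxT : x ∈ T := Finset.mem_erase.2 ⟨hxyne, Finset.mem_compl.2 hxK⟩
  have hxfy : x ∈ T.filter (G.Adj y) := Finset.mem_filter.2 ⟨hxT, hxy.symm⟩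
  -- find z
  obtain ⟨z, hz1, hz2⟩ : ∃ z ∈ T.filter (G.Adj v), z ∉ T.filter (G.Adj y) := by
    rw [← Finset.not_subset]
    intro hs
    have hsub2 : T.filter (G.Adj v) ⊆ (T.filter (G.Adj y)).erase x := by
      intro a ha
      refine Finset.mem_erase.2 ⟨?_, hs ha⟩
      rintro rfl
      exact hvx (Finset.mem_filter.1 ha).2
    have h1 := Finset.card_le_card hsub2
    rw [Finset.card_erase_of_mem hxfy] at h1
    have h2 : 1 ≤ (T.filter (G.Adj y)).card := Finset.card_pos.2 ⟨x, hxfy⟩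
    omega
  have hzT : z ∈ T := (Finset.mem_filter.1 hz1).1
  have hvz : G.Adj v z := (Finset.mem_filter.1 hz1).2
  have hyz : ¬G.Adj y z := fun h => hz2 (Finset.mem_filter.2 ⟨hzT, h⟩)
  have hzK : z ∉ K := Finset.mem_compl.1 (Finset.mem_of_mem_erase hzT)
  have hzx : z ≠ x := fun h => hvx (h ▸ hvz)
  have hwzne : w ≠ z := fun h => hzK (h ▸ hwK)
  have hwyadj : G.Adj y w := hwy.symm
  have hyzne : y ≠ z := fun h => hvy (by rw [h]; exact hvz)
  by_cases hxz : G.Adj x z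
  · by_cases hwz : G.Adj w z
    · -- C4 : x - y - w - z - x
      exact Split.noC4 h4 hwxne.symm hyzne hxy hwyadj hwz hxz.symm
        (fun h => hwx h.symm) hyz
    · -- C5 : x - y - w - v - z - x
      exact Split.noC5 h5 hxy hwyadj hwv' hvz hxz.symm (fun h => hwx h.symm)
        (fun h => hvx h.symm) (fun h => hvy h.symm) hyz hwz
  · -- 2P2 : edges x-y and v-z
    exact Split.no2P2 h2 hxy hvz (fun h => hvx h.symm) hxz (fun h => hvy h.symm) hyz

/-- A finite graph is a split graph iff it has no induced `C4`, `C5` or `2P2`. -/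
theorem split_iff_c4_c5_2p2_free {V : Type*} [Fintype V] (G : SimpleGraph V) :
    (∃ K I : Set V, (∀ v, v ∈ K ∨ v ∈ I) ∧ (∀ v, ¬ (v ∈ K ∧ v ∈ I)) ∧
      G.IsClique K ∧ _root_.IsIndepSet G I) ↔
    (_root_.Free (cycleGraph 4) G ∧ _root_.Free (cycleGraph 5) G ∧ _root_.Free twoP2 G) := by
  classical
  constructor
  · rintro ⟨K, I, hcov, hdisj, hKcl, hI⟩
    refine ⟨⟨fun f => ?_⟩, ⟨fun f => ?_⟩, ⟨fun f => ?_⟩⟩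
    · -- C4-free
      have a01 : G.Adj (f 0) (f 1) := f.map_rel_iff.2 (by decide)
      have a12 : G.Adj (f 1) (f 2) := f.map_rel_iff.2 (by decide)
      have a23 : G.Adj (f 2) (f 3) := f.map_rel_iff.2 (by decide)
      have a30 : G.Adj (f 3) (f 0) := f.map_rel_iff.2 (by decide)
      have n02 : ¬G.Adj (f 0) (f 2) := fun h => absurd (f.map_rel_iff.1 h) (by decide)
      have n13 : ¬G.Adj (f 1) (f 3) := fun h => absurd (f.map_rel_iff.1 h) (by decide)
      have e02 : f 0 ≠ f 2 := fun h => absurd (f.injective h) (by decide)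
      have e13 : f 1 ≠ f 3 := fun h => absurd (f.injective h) (by decide)
      have nK02 : ¬(f 0 ∈ K ∧ f 2 ∈ K) := fun ⟨h1, h2⟩ => n02 (hKcl h1 h2 e02)
      have nK13 : ¬(f 1 ∈ K ∧ f 3 ∈ K) := fun ⟨h1, h2⟩ => n13 (hKcl h1 h2 e13)
      have nI01 : ¬(f 0 ∈ I ∧ f 1 ∈ I) := fun ⟨h1, h2⟩ => hI h1 h2 a01.ne a01
      have nI12 : ¬(f 1 ∈ I ∧ f 2 ∈ I) := fun ⟨h1, h2⟩ => hI h1 h2 a12.ne a12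
      have nI23 : ¬(f 2 ∈ I ∧ f 3 ∈ I) := fun ⟨h1, h2⟩ => hI h1 h2 a23.ne a23
      have nI30 : ¬(f 3 ∈ I ∧ f 0 ∈ I) := fun ⟨h1, h2⟩ => hI h1 h2 a30.ne a30
      rcases hcov (f 0) with h0 | h0 <;> rcases hcov (f 1) with h1 | h1 <;>
        rcases hcov (f 2) with h2 | h2 <;> rcases hcov (f 3) with h3 | h3 <;>
        first
          | exact nK02 ⟨h0, h2⟩ | exact nK13 ⟨h1, h3⟩ | exact nI01 ⟨h0, h1⟩
          | exact nI12 ⟨h1, h2⟩ | exact nI23 ⟨h2, h3⟩ | exact nI30 ⟨h3, h0⟩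
    · -- C5-free
      have a01 : G.Adj (f 0) (f 1) := f.map_rel_iff.2 (by decide)
      have a12 : G.Adj (f 1) (f 2) := f.map_rel_iff.2 (by decide)
      have a23 : G.Adj (f 2) (f 3) := f.map_rel_iff.2 (by decide)
      have a34 : G.Adj (f 3) (f 4) := f.map_rel_iff.2 (by decide)
      have a40 : G.Adj (f 4) (f 0) := f.map_rel_iff.2 (by decide)
      have n02 : ¬G.Adj (f 0) (f 2) := fun h => absurd (f.map_rel_iff.1 h) (by decide)
      have n03 : ¬G.Adj (f 0) (f 3) := fun h => absurd (f.map_rel_iff.1 h) (by decide)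
      have n13 : ¬G.Adj (f 1) (f 3) := fun h => absurd (f.map_rel_iff.1 h) (by decide)
      have n14 : ¬G.Adj (f 1) (f 4) := fun h => absurd (f.map_rel_iff.1 h) (by decide)
      have n24 : ¬G.Adj (f 2) (f 4) := fun h => absurd (f.map_rel_iff.1 h) (by decide)
      have e02 : f 0 ≠ f 2 := fun h => absurd (f.injective h) (by decide)
      have e03 : f 0 ≠ f 3 := fun h => absurd (f.injective h) (by decide)
      have e13 : f 1 ≠ f 3 := fun h => absurd (f.injective h) (by decide)
      have e14 : f 1 ≠ f 4 := fun h => absurd (f.injective h) (by decide)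
      have e24 : f 2 ≠ f 4 := fun h => absurd (f.injective h) (by decide)
      have nK02 : ¬(f 0 ∈ K ∧ f 2 ∈ K) := fun ⟨h1, h2⟩ => n02 (hKcl h1 h2 e02)
      have nK03 : ¬(f 0 ∈ K ∧ f 3 ∈ K) := fun ⟨h1, h2⟩ => n03 (hKcl h1 h2 e03)
      have nK13 : ¬(f 1 ∈ K ∧ f 3 ∈ K) := fun ⟨h1, h2⟩ => n13 (hKcl h1 h2 e13)
      have nK14 : ¬(f 1 ∈ K ∧ f 4 ∈ K) := fun ⟨h1, h2⟩ => n14 (hKcl h1 h2 e14)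
      have nK24 : ¬(f 2 ∈ K ∧ f 4 ∈ K) := fun ⟨h1, h2⟩ => n24 (hKcl h1 h2 e24)
      have nI01 : ¬(f 0 ∈ I ∧ f 1 ∈ I) := fun ⟨h1, h2⟩ => hI h1 h2 a01.ne a01
      have nI12 : ¬(f 1 ∈ I ∧ f 2 ∈ I) := fun ⟨h1, h2⟩ => hI h1 h2 a12.ne a12
      have nI23 : ¬(f 2 ∈ I ∧ f 3 ∈ I) := fun ⟨h1, h2⟩ => hI h1 h2 a23.ne a23
      have nI34 : ¬(f 3 ∈ I ∧ f 4 ∈ I) := fun ⟨h1, h2⟩ => hI h1 h2 a34.ne a34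
      have nI40 : ¬(f 4 ∈ I ∧ f 0 ∈ I) := fun ⟨h1, h2⟩ => hI h1 h2 a40.ne a40
      rcases hcov (f 0) with h0 | h0 <;> rcases hcov (f 1) with h1 | h1 <;>
        rcases hcov (f 2) with h2 | h2 <;> rcases hcov (f 3) with h3 | h3 <;>
        rcases hcov (f 4) with h4' | h4' <;>
        first
          | exact nK02 ⟨h0, h2⟩ | exact nK03 ⟨h0, h3⟩ | exact nK13 ⟨h1, h3⟩
          | exact nK14 ⟨h1, h4'⟩ | exact nK24 ⟨h2, h4'⟩
          | exact nI01 ⟨h0, h1⟩ | exact nI12 ⟨h1, h2⟩ | exact nI23 ⟨h2, h3⟩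
          | exact nI34 ⟨h3, h4'⟩ | exact nI40 ⟨h4', h0⟩
    · -- 2P2-free
      have a01 : G.Adj (f 0) (f 1) := f.map_rel_iff.2 (by decide)
      have a23 : G.Adj (f 2) (f 3) := f.map_rel_iff.2 (by decide)
      have n02 : ¬G.Adj (f 0) (f 2) := fun h => absurd (f.map_rel_iff.1 h) (by decide)
      have n03 : ¬G.Adj (f 0) (f 3) := fun h => absurd (f.map_rel_iff.1 h) (by decide)
      have n12 : ¬G.Adj (f 1) (f 2) := fun h => absurd (f.map_rel_iff.1 h) (by decide)
      have n13 : ¬G.Adj (f 1) (f 3) := fun h => absurd (f.map_rel_iff.1 h) (by decide)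
      have e02 : f 0 ≠ f 2 := fun h => absurd (f.injective h) (by decide)
      have e03 : f 0 ≠ f 3 := fun h => absurd (f.injective h) (by decide)
      have e12 : f 1 ≠ f 2 := fun h => absurd (f.injective h) (by decide)
      have e13 : f 1 ≠ f 3 := fun h => absurd (f.injective h) (by decide)
      have nK02 : ¬(f 0 ∈ K ∧ f 2 ∈ K) := fun ⟨h1, h2⟩ => n02 (hKcl h1 h2 e02)
      have nK03 : ¬(f 0 ∈ K ∧ f 3 ∈ K) := fun ⟨h1, h2⟩ => n03 (hKcl h1 h2 e03)
      have nK12 : ¬(f 1 ∈ K ∧ f 2 ∈ K) := fun ⟨h1, h2⟩ => n12 (hKcl h1 h2 e12)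
      have nK13 : ¬(f 1 ∈ K ∧ f 3 ∈ K) := fun ⟨h1, h2⟩ => n13 (hKcl h1 h2 e13)
      have nI01 : ¬(f 0 ∈ I ∧ f 1 ∈ I) := fun ⟨h1, h2⟩ => hI h1 h2 a01.ne a01
      have nI23 : ¬(f 2 ∈ I ∧ f 3 ∈ I) := fun ⟨h1, h2⟩ => hI h1 h2 a23.ne a23
      rcases hcov (f 0) with h0 | h0 <;> rcases hcov (f 1) with h1 | h1 <;>
        rcases hcov (f 2) with h2 | h2 <;> rcases hcov (f 3) with h3 | h3 <;>
        first
          | exact nK02 ⟨h0, h2⟩ | exact nK03 ⟨h0, h3⟩ | exact nK12 ⟨h1, h2⟩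
          | exact nK13 ⟨h1, h3⟩ | exact nI01 ⟨h0, h1⟩ | exact nI23 ⟨h2, h3⟩
  · rintro ⟨h4, h5, h2⟩
    -- choose a maximum clique minimizing the number of edges outside
    obtain ⟨K₀, hK₀, hmax0⟩ :=
      (Finset.univ.filter (fun K : Finset V => G.IsClique (K : Set V))).exists_max_image
        Finset.card ⟨∅, by simp⟩
    obtain ⟨K, hKmem, hmin0⟩ :=
      ((Finset.univ.filter (fun K : Finset V => G.IsClique (K : Set V))).filter
          (fun K => K.card = K₀.card)).exists_min_image
        (fun K => ∑ a ∈ Kᶜ, (Kᶜ.filter (G.Adj a)).card) ⟨K₀, by simp [hK₀]⟩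
    simp only [Finset.mem_filter, Finset.mem_univ, true_and] at hKmem
    obtain ⟨hKcl, hKcard⟩ := hKmem
    have hmax : ∀ K' : Finset V, G.IsClique (K' : Set V) → K'.card ≤ K.card := by
      intro K' h
      have := hmax0 K' (by simp [h])
      omega
    have hmin : ∀ K' : Finset V, G.IsClique (K' : Set V) → K'.card = K.card →
        ∑ a ∈ Kᶜ, (Kᶜ.filter (G.Adj a)).card ≤ ∑ a ∈ K'ᶜ, (K'ᶜ.filter (G.Adj a)).card := by
      intro K' h hc
      exact hmin0 K' (by simp [h]; omega)
    refine ⟨(K : Set V), ((Kᶜ : Finset V) : Set V), ?_, ?_, hKcl, ?_⟩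
    · intro v
      by_cases h : v ∈ K
      · exact Or.inl h
      · exact Or.inr (by simpa using h)
    · intro v ⟨h1, h2⟩
      exact (by simpa using h2 : v ∉ K) h1
    · intro x hx y hy hne hadj
      have hxK : x ∉ K := by simpa using hx
      have hyK : y ∉ K := by simpa using hy
      -- each of x, y has a non-neighbour in K
      have hAx : ∃ u ∈ K, ¬G.Adj u x := by
        by_contra hcon
        push_neg at hcon
        have hcl' : G.IsClique ((insert x K : Finset V) : Set V) := by
          rw [Finset.coe_insert]
          exact hKcl.insert (fun b hb _ => (hcon b hb).symm)
        have := hmax _ hcl'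
        rw [Finset.card_insert_of_notMem hxK] at this
        omega
      have hAy : ∃ u ∈ K, ¬G.Adj u y := by
        by_contra hcon
        push_neg at hcon
        have hcl' : G.IsClique ((insert y K : Finset V) : Set V) := by
          rw [Finset.coe_insert]
          exact hKcl.insert (fun b hb _ => (hcon b hb).symm)
        have := hmax _ hcl'
        rw [Finset.card_insert_of_notMem hyK] at this
        omega
      by_cases hc2 : ∃ u ∈ K, ∃ w ∈ K, ¬G.Adj u x ∧ G.Adj u y ∧ G.Adj w x ∧ ¬G.Adj w y
      · obtain ⟨u, huK, w, hwK, hux, huy, hwx, hwy⟩ := hc2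
        have huw : u ≠ w := fun h => hwy (h ▸ huy)
        have exu : x ≠ u := fun h => hxK (h ▸ huK)
        have eyw : y ≠ w := fun h => hyK (h ▸ hwK)
        exact Split.noC4 h4 exu eyw hadj huy.symm
          (hKcl huK hwK huw) hwx (fun h => hux h.symm) (fun h => hwy h.symm)
      by_cases hc1 : ∃ u ∈ K, ∃ w ∈ K, u ≠ w ∧ ¬G.Adj u x ∧ ¬G.Adj u y ∧ ¬G.Adj w x ∧ ¬G.Adj w y
      · obtain ⟨u, huK, w, hwK, huw, hux, huy, hwx, hwy⟩ := hc1
        exact Split.no2P2 h2 hadj (hKcl huK hwK huw) (fun h => hux h.symm)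
          (fun h => hwx h.symm) (fun h => huy h.symm) (fun h => hwy h.symm)
      obtain ⟨u, huK, hux⟩ := hAx
      obtain ⟨u', hu'K, hu'y⟩ := hAy
      have hcommon : ∃ v ∈ K, ¬G.Adj v x ∧ ¬G.Adj v y := by
        by_cases h1 : G.Adj u y
        · by_cases h2' : G.Adj u' x
          · exact absurd ⟨u, huK, u', hu'K, hux, h1, h2', hu'y⟩ hc2
          · exact ⟨u', hu'K, h2', hu'y⟩
        · exact ⟨u, huK, hux, h1⟩
      obtain ⟨v, hvK, hvx, hvy⟩ := hcommon
      have hdicho : (∀ w ∈ K, w ≠ v → G.Adj w y) ∨ (∀ w ∈ K, w ≠ v → G.Adj w x) := by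
        by_contra hcon
        push_neg at hcon
        obtain ⟨⟨w1, hw1K, hw1v, hw1y⟩, ⟨w2, hw2K, hw2v, hw2x⟩⟩ := hcon
        by_cases hx1 : G.Adj w1 x
        · by_cases hy2 : G.Adj w2 y
          · exact absurd ⟨w2, hw2K, w1, hw1K, hw2x, hy2, hx1, hw1y⟩ hc2
          · exact absurd ⟨v, hvK, w2, hw2K, Ne.symm hw2v, hvx, hvy, hw2x, hy2⟩ hc1
        · exact absurd ⟨v, hvK, w1, hw1K, Ne.symm hw1v, hvx, hvy, hx1, hw1y⟩ hc1
      rcases hdicho with hA | hA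
      · exact Split.keyLemma h4 h5 h2 K hKcl hmax hmin hxK hyK hadj hvK hvx hvy hA
      · exact Split.keyLemma h4 h5 h2 K hKcl hmax hmin hyK hxK hadj.symm hvK hvy hvx hA
end

section
/- Every connected paw-free graph is either triangle-free or complete multipartite. -/
open SimpleGraph

section helpers
variable {V : Type*} {G : SimpleGraph V}

lemma pawEmb (hf : _root_.Free paw G) {a b c d : V} (hab : G.Adj a b) (hac : G.Adj a c)
    (hbc : G.Adj b c) (hcd : G.Adj c d) (had : ¬ G.Adj a d) (hbd : ¬ G.Adj b d) : False := by
  have hda : d ≠ a := fun h => hbd (by rw [h]; exact hab.symm)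
  have hdb : d ≠ b := fun h => had (by rw [h]; exact hab)
  have hda' : ¬ G.Adj d a := fun h => had h.symm
  have hdb' : ¬ G.Adj d b := fun h => hbd h.symm
  refine hf.false ⟨⟨![a,b,c,d], ?_⟩, ?_⟩
  · intro i j h
    fin_cases i <;> fin_cases j <;>
      simp_all [hab.ne, hac.ne, hbc.ne, hcd.ne, hab.ne', hac.ne', hbc.ne', hcd.ne'] <;>
      first
        | rfl
        | (exact absurd rfl hda) | (exact absurd rfl hdb)
        | (exact absurd rfl hda.symm) | (exact absurd rfl hdb.symm)
  · intro i j
    show G.Adj (![a,b,c,d] i) (![a,b,c,d] j) ↔ paw.Adj i j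
    fin_cases i <;> fin_cases j <;>
      simp [paw, SimpleGraph.fromRel_adj, hab, hac, hbc, hcd, had, hbd,
        hab.symm, hac.symm, hbc.symm, hcd.symm, hda', hdb'] <;> decide

/-- A vertex adjacent to exactly one vertex of a triangle yields a paw. -/
lemma adjTwo (hf : _root_.Free paw G) {a b c v : V} (hab : G.Adj a b) (hac : G.Adj a c)
    (hbc : G.Adj b c) (hva : G.Adj v a) (hvb : ¬ G.Adj v b) (hvc : ¬ G.Adj v c) : False :=
  pawEmb hf hbc hab.symm hac.symm hva.symm (fun h => hvb h.symm) (fun h => hvc h.symm)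

def InTri (G : SimpleGraph V) (v : V) : Prop := ∃ p q, G.Adj v p ∧ G.Adj v q ∧ G.Adj p q

lemma inTri_of_adj (hf : _root_.Free paw G) {u v : V} (h : InTri G u) (huv : G.Adj u v) :
    InTri G v := by
  obtain ⟨p, q, hup, huq, hpq⟩ := h
  by_cases hvp : v = p
  · subst hvp; exact ⟨u, q, huv.symm, hpq, huq⟩
  by_cases hvq : v = q
  · subst hvq; exact ⟨u, p, huv.symm, hpq.symm, hup⟩
  by_cases h1 : G.Adj v p
  · exact ⟨u, p, huv.symm, h1, hup⟩
  by_cases h2 : G.Adj v q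
  · exact ⟨u, q, huv.symm, h2, huq⟩
  exact absurd (adjTwo hf hup huq hpq huv.symm h1 h2) id

lemma all_inTri (hc : G.Connected) (hf : _root_.Free paw G) {a : V} (ha : InTri G a) (v : V) :
    InTri G v := by
  have key : ∀ {x y : V} (_ : G.Walk x y), InTri G x → InTri G y := by
    intro x y w
    induction w with
    | nil => exact id
    | cons h p ih => exact fun hx => ih (inTri_of_adj hf hx h)
  exact key ((hc.preconnected a v).some) ha

lemma edge_in_tri (hc : G.Connected) (hf : _root_.Free paw G) {a : V} (ha : InTri G a)
    {x y : V} (hxy : G.Adj x y) : ∃ t, G.Adj x t ∧ G.Adj y t := by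
  obtain ⟨p, q, hxp, hxq, hpq⟩ := all_inTri hc hf ha x
  by_cases hyp : y = p
  · subst hyp; exact ⟨q, hxq, hpq⟩
  by_cases hyq : y = q
  · subst hyq; exact ⟨p, hxp, hpq.symm⟩
  by_cases h1 : G.Adj y p
  · exact ⟨p, hxp, h1⟩
  by_cases h2 : G.Adj y q
  · exact ⟨q, hxq, h2⟩
  exact absurd (adjTwo hf hxp hxq hpq hxy.symm h1 h2) id

lemma no_bad (hc : G.Connected) (hf : _root_.Free paw G) {a : V} (ha : InTri G a) :
    ∀ k : ℕ, ∀ v x y : V, G.Adj x y → ¬ G.Adj v x → ¬ G.Adj v y → G.dist v x = k → False := by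
  intro k
  induction k using Nat.strong_induction_on with
  | _ k ih =>
  intro v x y hxy hvx hvy hd
  have hvnex : v ≠ x := by rintro rfl; exact hvy hxy
  have hk0 : k ≠ 0 := by
    rintro rfl
    exact hvnex (hc.dist_eq_zero_iff.mp hd)
  have hk1 : k ≠ 1 := by
    rintro rfl
    exact hvx (SimpleGraph.dist_eq_one_iff_adj.mp hd)
  have hk2 : 2 ≤ k := by omega
  -- get a neighbour w of x with dist v w = k - 1
  obtain ⟨p, hp⟩ := hc.exists_walk_length_eq_dist v x
  rw [hd] at hp
  have hq := p.reverse
  obtain ⟨w, hxw, q', hq'⟩ : ∃ w, G.Adj x w ∧ ∃ q' : G.Walk w v, q'.length = k - 1 := by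
    cases hrev : p.reverse with
    | nil =>
      exfalso
      have := SimpleGraph.Walk.length_reverse p
      rw [hrev] at this
      simp [hp] at this
      omega
    | cons h q' =>
      refine ⟨_, h, q', ?_⟩
      have := SimpleGraph.Walk.length_reverse p
      rw [hrev] at this
      simp [hp] at this
      omega
  have hdxw : G.dist w x = 1 := SimpleGraph.dist_eq_one_iff_adj.mpr hxw.symm
  have hdvw : G.dist v w = k - 1 := by
    have h1 : G.dist v w ≤ k - 1 := by
      calc G.dist v w ≤ q'.reverse.length := SimpleGraph.dist_le q'.reverse
        _ = k - 1 := by rw [SimpleGraph.Walk.length_reverse]; exact hq'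
    have h2 : k ≤ G.dist v w + 1 := by
      calc k = G.dist v x := hd.symm
        _ ≤ G.dist v w + G.dist w x := hc.dist_triangle
        _ = G.dist v w + 1 := by rw [hdxw]
    omega
  by_cases hk : 3 ≤ k
  · -- recurse on the edge w x
    have hvw : ¬ G.Adj v w := by
      intro h
      have := SimpleGraph.dist_eq_one_iff_adj.mpr h
      omega
    exact ih (k-1) (by omega) v w x hxw.symm hvw hvx hdvw
  · -- k = 2
    have hk2' : k = 2 := by omega
    have hvw : G.Adj v w := by
      apply SimpleGraph.dist_eq_one_iff_adj.mp
      omega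
    obtain ⟨t, hxt, hyt⟩ := edge_in_tri hc hf ha hxy
    by_cases hwy : G.Adj w y
    · exact adjTwo hf hxw.symm hwy hxy hvw hvx hvy
    · have hwney : w ≠ y := by rintro rfl; exact hvy hvw
      by_cases hwt : G.Adj w t
      · by_cases hvt : G.Adj v t
        · exact adjTwo hf hxt.symm hyt.symm hxy hvt hvx hvy
        · exact adjTwo hf hxw.symm hwt hxt hvw hvx hvt
      · exact adjTwo hf hxy hxt hyt hxw.symm hwy hwt

end helpers

/-- Every connected paw-free graph is triangle-free or complete multipartite. -/
theorem pawFree_triangleFree_or_completeMultipartite {V : Type*}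
    (G : SimpleGraph V) (hc : G.Connected) (hf : _root_.Free paw G) :
    G.CliqueFree 3 ∨ ∃ s : Setoid V, ∀ u v, G.Adj u v ↔ ¬ s.r u v := by
  classical
  by_cases htf : G.CliqueFree 3
  · exact Or.inl htf
  right
  rw [SimpleGraph.CliqueFree] at htf
  push_neg at htf
  obtain ⟨s, hs⟩ := htf
  rw [SimpleGraph.is3Clique_iff] at hs
  obtain ⟨A, B, C, hAB, hAC, hBC, -⟩ := hs
  have ha : InTri G A := ⟨B, C, hAB, hAC, hBC⟩
  refine ⟨⟨fun u v => ¬ G.Adj u v, ?_, ?_, ?_⟩, ?_⟩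
  · exact fun v => G.loopless.irrefl v
  · exact fun h ha' => h ha'.symm
  · intro u v w huv hvw hadj
    by_cases huvq : u = v
    · subst huvq; exact hvw hadj
    by_cases hvwq : v = w
    · subst hvwq; exact huv hadj
    exact no_bad hc hf ha (G.dist v u) v u w hadj (fun h => huv h.symm) hvw rfl
  · intro u v
    show G.Adj u v ↔ ¬ ¬ G.Adj u v
    exact not_not.symm
end

section
/- Let G be a chordal graph, let K be a clique in G, and let s and t be two vertices not in K, each having exactly two non-neighbours in K. If s and t are adjacent, then s and t have the same pair of non-neighbours in K. -/
open SimpleGraph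

/-- In a chordal graph, two adjacent vertices outside a clique `K`, each with
exactly two non-neighbours in `K`, have the same pair of non-neighbours in `K`. -/
theorem chordal_adjacent_same_nonNeighbours {V : Type*}
    (G : SimpleGraph V) (hch : Chordal G) (K : Set V) (hK : G.IsClique K)
    (s t : V) (hs : s ∉ K) (ht : t ∉ K)
    (hs2 : {x ∈ K | ¬ G.Adj s x}.ncard = 2)
    (ht2 : {x ∈ K | ¬ G.Adj t x}.ncard = 2)
    (hst : G.Adj s t) :
    {x ∈ K | ¬ G.Adj s x} = {x ∈ K | ¬ G.Adj t x} := by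
  by_contra hne
  set A := {x ∈ K | ¬ G.Adj s x} with hA
  set B := {x ∈ K | ¬ G.Adj t x} with hB
  have hAfin : A.Finite := Set.finite_of_ncard_ne_zero (by rw [hs2]; norm_num)
  have hBfin : B.Finite := Set.finite_of_ncard_ne_zero (by rw [ht2]; norm_num)
  have hAB : ¬ A ⊆ B := fun h =>
    hne (Set.eq_of_subset_of_ncard_le h (by rw [hs2, ht2]) hBfin)
  have hBA : ¬ B ⊆ A := fun h =>
    hne ((Set.eq_of_subset_of_ncard_le h (by rw [hs2, ht2]) hAfin).symm)
  obtain ⟨a, haA, haB⟩ := Set.not_subset.mp hAB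
  obtain ⟨b, hbB, hbA⟩ := Set.not_subset.mp hBA
  obtain ⟨haK, hsa⟩ := haA
  obtain ⟨hbK, htb⟩ := hbB
  have hta : G.Adj t a := by
    by_contra h; exact haB ⟨haK, h⟩
  have hsb : G.Adj s b := by
    by_contra h; exact hbA ⟨hbK, h⟩
  have hab : G.Adj a b := hK haK hbK (fun h => htb (h ▸ hta))
  have hsnea : s ≠ a := fun h => hs (h ▸ haK)
  have hsneb : s ≠ b := fun h => hs (h ▸ hbK)
  have htnea : t ≠ a := fun h => ht (h ▸ haK)
  have htneb : t ≠ b := fun h => ht (h ▸ hbK)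
  have hane : a ≠ b := fun h => htb (h ▸ hta)
  have hstne : s ≠ t := hst.ne
  apply (hch 4 le_rfl).false
  have hinj : Function.Injective ![s, t, a, b] := by
    intro u v huv
    fin_cases u <;> fin_cases v <;> simp_all <;>
      first
        | rfl
        | (exfalso; first
            | exact hstne huv | exact hstne huv.symm
            | exact hsnea huv | exact hsnea huv.symm
            | exact hsneb huv | exact hsneb huv.symm
            | exact htnea huv | exact htnea huv.symm
            | exact htneb huv | exact htneb huv.symm
            | exact hane huv | exact hane huv.symm)
  refine ⟨⟨![s, t, a, b], hinj⟩, ?_⟩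
  intro u v
  show G.Adj _ _ ↔ (cycleGraph 4).Adj u v
  fin_cases u <;> fin_cases v <;>
    rw [show ((cycleGraph 4).Adj _ _) = _ from propext cycleGraph_adj'] <;>
    simp <;>
    first
      | exact fun h => (G.irrefl h).elim
      | exact hst
      | exact hst.symm
      | exact fun h => absurd h hsa
      | exact fun h => absurd h.symm hsa
      | exact hsb
      | exact hsb.symm
      | exact hta
      | exact hta.symm
      | exact fun h => absurd h htb
      | exact fun h => absurd h.symm htb
      | exact hab
      | exact hab.symm
      | exact iff_of_false hsa (by decide)
      | exact iff_of_false (fun h => hsa h.symm) (by decide)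
      | exact iff_of_true hsb (by decide)
      | exact iff_of_true hsb.symm (by decide)
end

section
/- Let G be a chordal graph, let K be a clique in G, let s be a vertex not in K with exactly one non-neighbour v in K, and let t be a vertex not in K with exactly two non-neighbours in K. If s and t are adjacent, then v is also a non-neighbour of t (i.e., s and t share a common non-neighbour in K). -/
open SimpleGraph

/-- In a chordal graph, if `s` outside a clique `K` has exactly one non-neighbour
`v` in `K`, and `t` outside `K` has exactly two non-neighbours in `K`, and `s`
and `t` are adjacent, then `v` is also a non-neighbour of `t`. -/
theorem chordal_common_nonNeighbour {V : Type*}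
    (G : SimpleGraph V) (hch : Chordal G) (K : Set V) (hK : G.IsClique K)
    (s t v : V) (hs : s ∉ K) (ht : t ∉ K)
    (hs1 : {x ∈ K | ¬ G.Adj s x} = {v})
    (ht2 : {x ∈ K | ¬ G.Adj t x}.ncard = 2)
    (hst : G.Adj s t) :
    ¬ G.Adj t v := by
  intro htv
  have hv : v ∈ K ∧ ¬ G.Adj s v := by
    have : v ∈ {x ∈ K | ¬ G.Adj s x} := by rw [hs1]; rfl
    exact this
  obtain ⟨w, hwK, hwt⟩ : ∃ w, w ∈ K ∧ ¬ G.Adj t w := by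
    obtain ⟨w, hw⟩ : {x ∈ K | ¬ G.Adj t x}.Nonempty :=
      Set.nonempty_of_ncard_ne_zero (by omega)
    exact ⟨w, hw.1, hw.2⟩
  have hvw : v ≠ w := fun h => hwt (h ▸ htv)
  have hsw : G.Adj s w := by
    by_contra h
    have : w ∈ ({v} : Set V) := hs1 ▸ ⟨hwK, h⟩
    exact hvw this.symm
  have hsv := hv.2
  have hvwadj : G.Adj v w := hK hv.1 hwK hvw
  have hsvne : s ≠ v := fun h => hs (h ▸ hv.1)
  have hswne : s ≠ w := fun h => hs (h ▸ hwK)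
  have htvne : t ≠ v := fun h => ht (h ▸ hv.1)
  have htwne : t ≠ w := fun h => ht (h ▸ hwK)
  have hstne : s ≠ t := hst.ne
  let f : Fin 4 → V := ![s, t, v, w]
  have hinj : Function.Injective f := by
    intro a b hab
    fin_cases a <;> fin_cases b <;>
      simp_all [f, hstne, hsvne, hswne, htvne, htwne, hvw, hstne.symm, hsvne.symm,
        hswne.symm, htvne.symm, htwne.symm, hvw.symm]
  have hvs : ¬ G.Adj v s := fun h => hsv h.symm
  have hwtn : ¬ G.Adj w t := fun h => hwt h.symm
  refine (hch 4 le_rfl).false ⟨⟨f, hinj⟩, ?_⟩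
  intro a b
  fin_cases a <;> fin_cases b <;>
    simp [f, cycleGraph_adj, hst, htv, hvwadj, hsw, hst.symm, htv.symm, hvwadj.symm,
      hsw.symm, hsv, hwt, hvs, hwtn,
      (by decide : ¬ (-2 : Fin 4) = 1), (by decide : ¬ (2 : Fin 4) = 1),
      (by decide : (-3 : Fin 4) = 1)]
end

section
/- Let G be a graph that is (2P2, C5, S_{1,1,2})-free and contains an induced net with end-vertices a1,a2,a3 and mid-vertices b1,b2,b3. Then no vertex outside the net has exactly one or exactly two neighbours among the six net vertices. -/
open SimpleGraph

lemma twoP2_embed {V : Type*} {G : SimpleGraph V} {v0 v1 v2 v3 : V}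
    (d01 : v0 ≠ v1) (d02 : v0 ≠ v2) (d03 : v0 ≠ v3)
    (d12 : v1 ≠ v2) (d13 : v1 ≠ v3) (d23 : v2 ≠ v3)
    (h01 : G.Adj v0 v1) (h23 : G.Adj v2 v3)
    (h02 : ¬G.Adj v0 v2) (h03 : ¬G.Adj v0 v3)
    (h12 : ¬G.Adj v1 v2) (h13 : ¬G.Adj v1 v3) :
    Nonempty (twoP2 ↪g G) := by
  constructor
  have hinj : Function.Injective ![v0, v1, v2, v3] := by
    intro s t hst
    fin_cases s <;> fin_cases t <;> simp_all <;>
      first | exact (d01 hst).elim | exact (d02 hst).elim | exact (d03 hst).elim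
            | exact (d12 hst).elim | exact (d13 hst).elim | exact (d23 hst).elim
            | exact (d01 hst.symm).elim | exact (d02 hst.symm).elim
            | exact (d03 hst.symm).elim | exact (d12 hst.symm).elim
            | exact (d13 hst.symm).elim | exact (d23 hst.symm).elim
  refine ⟨⟨![v0, v1, v2, v3], hinj⟩, ?_⟩
  intro i j
  have h10 := h01.symm
  have h32 := h23.symm
  have h20 : ¬G.Adj v2 v0 := fun h => h02 h.symm
  have h30 : ¬G.Adj v3 v0 := fun h => h03 h.symm
  have h21 : ¬G.Adj v2 v1 := fun h => h12 h.symm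
  have h31 : ¬G.Adj v3 v1 := fun h => h13 h.symm
  fin_cases i <;> fin_cases j <;>
    simp_all [twoP2, SimpleGraph.fromRel_adj]

lemma chair_embed {V : Type*} {G : SimpleGraph V} {v0 v1 v2 v3 v4 : V}
    (d01 : v0 ≠ v1) (d02 : v0 ≠ v2) (d03 : v0 ≠ v3) (d04 : v0 ≠ v4)
    (d12 : v1 ≠ v2) (d13 : v1 ≠ v3) (d14 : v1 ≠ v4)
    (d23 : v2 ≠ v3) (d24 : v2 ≠ v4) (d34 : v3 ≠ v4)
    (h01 : G.Adj v0 v1) (h02 : G.Adj v0 v2)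
    (h03 : G.Adj v0 v3) (h34 : G.Adj v3 v4)
    (h12 : ¬G.Adj v1 v2) (h13 : ¬G.Adj v1 v3)
    (h14 : ¬G.Adj v1 v4) (h23 : ¬G.Adj v2 v3)
    (h24 : ¬G.Adj v2 v4) (h04 : ¬G.Adj v0 v4) :
    Nonempty (chair ↪g G) := by
  constructor
  have hinj : Function.Injective ![v0, v1, v2, v3, v4] := by
    intro s t hst
    fin_cases s <;> fin_cases t <;> simp_all <;>
      first | exact (d01 hst).elim | exact (d02 hst).elim | exact (d03 hst).elim
            | exact (d04 hst).elim | exact (d12 hst).elim | exact (d13 hst).elim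
            | exact (d14 hst).elim | exact (d23 hst).elim | exact (d24 hst).elim
            | exact (d34 hst).elim
            | exact (d01 hst.symm).elim | exact (d02 hst.symm).elim
            | exact (d03 hst.symm).elim | exact (d04 hst.symm).elim
            | exact (d12 hst.symm).elim | exact (d13 hst.symm).elim
            | exact (d14 hst.symm).elim | exact (d23 hst.symm).elim
            | exact (d24 hst.symm).elim | exact (d34 hst.symm).elim
  refine ⟨⟨![v0, v1, v2, v3, v4], hinj⟩, ?_⟩
  intro i j
  have h10 := h01.symm
  have h20 := h02.symm
  have h30 := h03.symm
  have h43 := h34.symm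
  have h21 : ¬G.Adj v2 v1 := fun h => h12 h.symm
  have h31 : ¬G.Adj v3 v1 := fun h => h13 h.symm
  have h41 : ¬G.Adj v4 v1 := fun h => h14 h.symm
  have h32 : ¬G.Adj v3 v2 := fun h => h23 h.symm
  have h42 : ¬G.Adj v4 v2 := fun h => h24 h.symm
  have h40 : ¬G.Adj v4 v0 := fun h => h04 h.symm
  fin_cases i <;> fin_cases j <;>
    simp_all [chair, SimpleGraph.fromRel_adj]

lemma key (p q : Fin 3 → Bool)
    (h : (Finset.univ.filter fun i => p i = true).card +
          (Finset.univ.filter fun i => q i = true).card = 1 ∨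
         (Finset.univ.filter fun i => p i = true).card +
          (Finset.univ.filter fun i => q i = true).card = 2) :
    (∃ i k, p i = true ∧ k ≠ i ∧ p k = false ∧ q k = false) ∨
      ((∀ i, p i = false) ∧ ∃ m j, q m = true ∧ j ≠ m ∧ q j = false) := by
  revert h; revert p q; decide

/-- If a `(2P2, C5, S_{1,1,2})`-free graph contains an induced net, then no vertex
outside the net has exactly one or exactly two neighbours among the six net
vertices. -/
theorem net_no_one_or_two_neighbours {V : Type*} (G : SimpleGraph V)
    (h2P2 : _root_.Free twoP2 G) (hC5 : _root_.Free (cycleGraph 5) G) (hchair : _root_.Free chair G)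
    (a b : Fin 3 → V)
    (hinj : Function.Injective (Sum.elim a b : Fin 3 ⊕ Fin 3 → V))
    (hbb : ∀ i j, i ≠ j → G.Adj (b i) (b j))
    (haa : ∀ i j, ¬ G.Adj (a i) (a j))
    (hab : ∀ i j, G.Adj (a i) (b j) ↔ i = j)
    (x : V) (hx : ∀ i, x ≠ a i ∧ x ≠ b i)
    (hcount : {i | G.Adj x (a i)}.ncard + {i | G.Adj x (b i)}.ncard = 1 ∨
              {i | G.Adj x (a i)}.ncard + {i | G.Adj x (b i)}.ncard = 2) :
    False := by
  classical
  have haa' : ∀ i j : Fin 3, i ≠ j → a i ≠ a j := by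
    intro i j hij h
    have : (Sum.inl i : Fin 3 ⊕ Fin 3) = Sum.inl j := hinj (by simpa using h)
    simp_all
  have hba' : ∀ i j : Fin 3, b i ≠ a j := by
    intro i j h
    have : (Sum.inr i : Fin 3 ⊕ Fin 3) = Sum.inl j := hinj (by simpa using h)
    simp_all
  have hbb' : ∀ i j : Fin 3, i ≠ j → b i ≠ b j := by
    intro i j hij h
    have : (Sum.inr i : Fin 3 ⊕ Fin 3) = Sum.inr j := hinj (by simpa using h)
    simp_all
  set p : Fin 3 → Bool := fun i => decide (G.Adj x (a i)) with hp
  set q : Fin 3 → Bool := fun i => decide (G.Adj x (b i)) with hq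
  have hpiff : ∀ i, p i = true ↔ G.Adj x (a i) := fun i => by simp [hp]
  have hqiff : ∀ i, q i = true ↔ G.Adj x (b i) := fun i => by simp [hq]
  have hpiff' : ∀ i, p i = false ↔ ¬ G.Adj x (a i) := fun i => by simp [hp]
  have hqiff' : ∀ i, q i = false ↔ ¬ G.Adj x (b i) := fun i => by simp [hq]
  have hcard : ∀ (r : Fin 3 → Bool) (P : Fin 3 → Prop),
      (∀ i, r i = true ↔ P i) →
      {i | P i}.ncard = (Finset.univ.filter fun i => r i = true).card := by
    intro r P hr
    rw [← Set.ncard_coe_finset]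
    congr 1
    ext i
    simp [hr]
  rw [hcard p _ hpiff, hcard q _ hqiff] at hcount
  rcases key p q hcount with ⟨i, k, hpi, hki, hpk, hqk⟩ | ⟨hpall, m, j, hqm, hjm, hqj⟩
  · -- 2P2 on x, a i, a k, b k
    rw [hpiff] at hpi
    rw [hpiff'] at hpk
    rw [hqiff'] at hqk
    obtain ⟨e⟩ := twoP2_embed (G := G) (v0 := x) (v1 := a i) (v2 := a k) (v3 := b k)
      (hx i).1 (hx k).1 (hx k).2
      (haa' i k (fun h => hki h.symm)) (fun h => hba' k i h.symm) (fun h => hba' k k h.symm)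
      hpi ((hab k k).2 rfl) hpk hqk (haa i k)
      (fun h => hki (((hab i k).1 h).symm))
    exact h2P2.false e
  · -- chair: centre b m, leaves a m and x, path b m - b j - a j
    rw [hqiff] at hqm
    rw [hqiff'] at hqj
    have hpm : ¬ G.Adj x (a m) := (hpiff' m).1 (hpall m)
    have hpj : ¬ G.Adj x (a j) := (hpiff' j).1 (hpall j)
    obtain ⟨e⟩ := chair_embed (G := G) (v0 := b m) (v1 := a m) (v2 := x) (v3 := b j) (v4 := a j)
      (hba' m m) (fun h => (hx m).2 h.symm) (hbb' m j (fun h => hjm h.symm)) (hba' m j)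
      (fun h => (hx m).1 h.symm) (fun h => hba' j m h.symm) (haa' m j (fun h => hjm h.symm))
      (hx j).2 (hx j).1 (hba' j j)
      ((hab m m).2 rfl).symm hqm.symm (hbb m j (fun h => hjm h.symm)) ((hab j j).2 rfl).symm
      (fun h => hpm h.symm) (fun h => hjm (((hab m j).1 h)).symm)
      (haa m j) hqj hpj (fun h => hjm (((hab j m).1 h.symm)))
    exact hchair.false e
end

section
/- Let G be a (2P2, C5, S_{1,1,2})-free graph containing an induced net with end-vertices a1,a2,a3 and mid-vertices b1,b2,b3 (edges: the triangle b1b2b3 and aibi for each i). If a vertex x outside the net has exactly three neighbours among the net vertices, then either x is adjacent to all three mid-vertices, or x is adjacent to exactly one end-vertex ai and the two mid-vertices bj, bk with j,k distinct from i. -/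
open SimpleGraph

lemma mk_twoP2 {V : Type*} (G : SimpleGraph V) (u v w z : V)
    (h1 : G.Adj u v) (h2 : G.Adj w z)
    (n1 : ¬G.Adj u w) (n2 : ¬G.Adj u z) (n3 : ¬G.Adj v w) (n4 : ¬G.Adj v z)
    (d1 : u ≠ w) (d2 : u ≠ z) (d3 : v ≠ w) (d4 : v ≠ z) :
    ¬ _root_.Free twoP2 G := by
  rw [_root_.Free, not_isEmpty_iff]
  refine ⟨⟨⟨![u,v,w,z], ?_⟩, ?_⟩⟩
  · intro i j hij
    fin_cases i <;> fin_cases j <;> simp_all <;>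
      first | rfl | exact absurd hij h1.ne | exact absurd hij h2.ne |
        exact absurd hij.symm h1.ne | exact absurd hij.symm h2.ne |
        exact absurd hij d1 | exact absurd hij d2 | exact absurd hij d3 | exact absurd hij d4 |
        exact absurd hij.symm d1 | exact absurd hij.symm d2 | exact absurd hij.symm d3 | exact absurd hij.symm d4
  · have n1' : ¬G.Adj w u := fun h => n1 h.symm
    have n2' : ¬G.Adj z u := fun h => n2 h.symm
    have n3' : ¬G.Adj w v := fun h => n3 h.symm
    have n4' : ¬G.Adj z v := fun h => n4 h.symm
    intro i j
    fin_cases i <;> fin_cases j <;>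
      simp [DFunLike.coe, Function.Embedding.coeFn_mk, twoP2, h1, h2, h1.symm, h2.symm, n1, n2, n3, n4, n1', n2', n3', n4', G.irrefl]
open Classical in
lemma ncard_fin3 (P : Fin 3 → Prop) :
    {i | P i}.ncard =
      (if P 0 then 1 else 0) + (if P 1 then 1 else 0) + (if P 2 then 1 else 0) := by
  classical
  rw [Set.ncard_eq_toFinset_card']
  simp [Set.toFinset_setOf]
  rw [show (Finset.univ : Finset (Fin 3)) = {0, 1, 2} by decide]
  rw [Finset.filter_insert, Finset.filter_insert, Finset.filter_singleton]
  by_cases h0 : P 0 <;> by_cases h1 : P 1 <;> by_cases h2 : P 2 <;>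
    simp [h0, h1, h2, Finset.card_insert_of_notMem]

lemma mk_chair {V : Type*} (G : SimpleGraph V) (c l1 l2 p q : V)
    (h1 : G.Adj c l1) (h2 : G.Adj c l2) (h3 : G.Adj c p) (h4 : G.Adj p q)
    (n1 : ¬G.Adj l1 l2) (n2 : ¬G.Adj l1 p) (n3 : ¬G.Adj l2 p)
    (n4 : ¬G.Adj c q) (n5 : ¬G.Adj l1 q) (n6 : ¬G.Adj l2 q)
    (d1 : l1 ≠ l2) (d2 : l1 ≠ p) (d3 : l2 ≠ p)
    (d4 : c ≠ q) (d5 : l1 ≠ q) (d6 : l2 ≠ q) :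
    ¬ _root_.Free chair G := by
  rw [_root_.Free, not_isEmpty_iff]
  refine ⟨⟨⟨![c,l1,l2,p,q], ?_⟩, ?_⟩⟩
  · intro i j hij
    fin_cases i <;> fin_cases j <;> simp_all
  · have n1' : ¬G.Adj l2 l1 := fun h => n1 h.symm
    have n2' : ¬G.Adj p l1 := fun h => n2 h.symm
    have n3' : ¬G.Adj p l2 := fun h => n3 h.symm
    have n4' : ¬G.Adj q c := fun h => n4 h.symm
    have n5' : ¬G.Adj q l1 := fun h => n5 h.symm
    have n6' : ¬G.Adj q l2 := fun h => n6 h.symm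
    intro i j
    fin_cases i <;> fin_cases j <;>
      simp [DFunLike.coe, Function.Embedding.coeFn_mk, chair, h1, h2, h3, h4, h1.symm, h2.symm, h3.symm, h4.symm,
        n1, n2, n3, n4, n5, n6, n1', n2', n3', n4', n5', n6', G.irrefl]


/-- If a vertex outside an induced net in a `(2P2, C5, S_{1,1,2})`-free graph has
exactly three neighbours among the net vertices, then it is adjacent to all three
mid-vertices, or to exactly one end-vertex `a i` and the two mid-vertices `b j`
with `j ≠ i`. -/
theorem net_three_neighbours {V : Type*} (G : SimpleGraph V)
    (h2P2 : _root_.Free twoP2 G) (hC5 : _root_.Free (cycleGraph 5) G) (hchair : _root_.Free chair G)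
    (a b : Fin 3 → V)
    (hinj : Function.Injective (Sum.elim a b : Fin 3 ⊕ Fin 3 → V))
    (hbb : ∀ i j, i ≠ j → G.Adj (b i) (b j))
    (haa : ∀ i j, ¬ G.Adj (a i) (a j))
    (hab : ∀ i j, G.Adj (a i) (b j) ↔ i = j)
    (x : V) (hx : ∀ i, x ≠ a i ∧ x ≠ b i)
    (hcount : {i | G.Adj x (a i)}.ncard + {i | G.Adj x (b i)}.ncard = 3) :
    (∀ i, G.Adj x (b i)) ∨
      ∃ i, (∀ j, G.Adj x (a j) ↔ j = i) ∧ (∀ j, G.Adj x (b j) ↔ j ≠ i) := by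
    classical
  have hane : ∀ i j : Fin 3, i ≠ j → a i ≠ a j := fun i j h heq => by
    have : (Sum.inl i : Fin 3 ⊕ Fin 3) = Sum.inl j :=
      hinj (show Sum.elim a b (.inl i) = Sum.elim a b (.inl j) from heq)
    simp_all
  have habne : ∀ i j : Fin 3, a i ≠ b j := fun i j heq => by
    have : (Sum.inl i : Fin 3 ⊕ Fin 3) = Sum.inr j :=
      hinj (show Sum.elim a b (.inl i) = Sum.elim a b (.inr j) from heq)
    simp_all
  -- 2P2 rule: i with x~a i, and m ∉ A ∪ B, m ≠ i gives 2P2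
  have key : ∀ i m : Fin 3, i ≠ m → G.Adj x (a i) → ¬G.Adj x (a m) → ¬G.Adj x (b m) → False := by
    intro i m him hxi hnxa hnxb
    exact mk_twoP2 G x (a i) (a m) (b m) hxi ((hab m m).mpr rfl) hnxa hnxb
      (haa i m) (fun h => him ((hab i m).mp h)) (hx m).1 (hx m).2
      (hane i m him) (habne i m) h2P2
  have keyC1 : ∀ i j m : Fin 3, i ≠ j → i ≠ m → j ≠ m →
      G.Adj x (a i) → G.Adj x (a j) → G.Adj x (a m) → ¬G.Adj x (b m) → False := by
    intro i j m hij him hjm hxi hxj hxm hnb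
    exact mk_chair G x (a i) (a j) (a m) (b m) hxi hxj hxm ((hab m m).mpr rfl)
      (haa i j) (haa i m) (haa j m) hnb
      (fun h => him ((hab i m).mp h)) (fun h => hjm ((hab j m).mp h))
      (hane i j hij) (hane i m him) (hane j m hjm)
      (hx m).2 (habne i m) (habne j m) hchair
  have keyC2 : ∀ i j m : Fin 3, i ≠ j → i ≠ m → j ≠ m →
      G.Adj x (a i) → G.Adj x (a j) → G.Adj x (b m) → ¬G.Adj x (a m) → False := by
    intro i j m hij him hjm hxi hxj hxb hna
    exact mk_chair G x (a i) (a j) (b m) (a m) hxi hxj hxb ((hab m m).mpr rfl).symm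
      (haa i j) (fun h => him ((hab i m).mp h)) (fun h => hjm ((hab j m).mp h))
      hna (haa i m) (haa j m)
      (hane i j hij) (habne i m) (habne j m)
      (hx m).1 (hane i m him) (hane j m hjm) hchair
  rw [ncard_fin3, ncard_fin3] at hcount
  by_cases ha0 : G.Adj x (a 0) <;> by_cases ha1 : G.Adj x (a 1) <;> by_cases ha2 : G.Adj x (a 2) <;>
    by_cases hb0 : G.Adj x (b 0) <;> by_cases hb1 : G.Adj x (b 1) <;> by_cases hb2 : G.Adj x (b 2) <;>
    simp only [ha0, ha1, ha2, hb0, hb1, hb2, if_true, if_false] at hcount <;>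
    first
    | omega
    | (refine Or.inl fun i => ?_
       fin_cases i <;> first | exact hb0 | exact hb1 | exact hb2)
    | exact (key 0 1 (by decide) ha0 ha1 hb1).elim
    | exact (key 0 2 (by decide) ha0 ha2 hb2).elim
    | exact (key 1 0 (by decide) ha1 ha0 hb0).elim
    | exact (key 1 2 (by decide) ha1 ha2 hb2).elim
    | exact (key 2 0 (by decide) ha2 ha0 hb0).elim
    | exact (key 2 1 (by decide) ha2 ha1 hb1).elim
    | exact (keyC1 0 1 2 (by decide) (by decide) (by decide) ha0 ha1 ha2 hb2).elim
    | exact (keyC2 0 1 2 (by decide) (by decide) (by decide) ha0 ha1 hb2 ha2).elim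
    | exact (keyC2 0 2 1 (by decide) (by decide) (by decide) ha0 ha2 hb1 ha1).elim
    | exact (keyC2 1 2 0 (by decide) (by decide) (by decide) ha1 ha2 hb0 ha0).elim
    | (refine Or.inr ⟨0, fun j => ?_, fun j => ?_⟩ <;>
        fin_cases j <;> simp [ha0, ha1, ha2, hb0, hb1, hb2]
       done)
    | (refine Or.inr ⟨1, fun j => ?_, fun j => ?_⟩ <;>
        fin_cases j <;> simp [ha0, ha1, ha2, hb0, hb1, hb2]
       done)
    | (refine Or.inr ⟨2, fun j => ?_, fun j => ?_⟩ <;>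
        fin_cases j <;> simp [ha0, ha1, ha2, hb0, hb1, hb2]
       done)
end

section
/- Let G be a (2P2, C5, S_{1,1,2})-free graph containing an induced net with end-vertices a1,a2,a3 and mid-vertices b1,b2,b3. If a vertex x outside the net has exactly four neighbours among the net vertices, then x is adjacent to exactly one end-vertex and to all three mid-vertices. -/
open SimpleGraph

lemma no2P2 {V : Type*} {G : SimpleGraph V} (h : _root_.Free twoP2 G) {u v w z : V}
    (huw : u ≠ w) (huz : u ≠ z) (hvw : v ≠ w) (hvz : v ≠ z)
    (e1 : G.Adj u v) (e2 : G.Adj w z)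
    (n1 : ¬G.Adj u w) (n2 : ¬G.Adj u z) (n3 : ¬G.Adj v w) (n4 : ¬G.Adj v z) : False := by
  have huv := e1.ne
  have hwz := e2.ne
  apply h.false
  refine ⟨⟨![u,v,w,z], ?_⟩, @fun i j => ?_⟩
  · intro i j hij
    fin_cases i <;> fin_cases j <;> simp_all
  · change G.Adj (![u,v,w,z] i) (![u,v,w,z] j) ↔ twoP2.Adj i j
    fin_cases i <;> fin_cases j <;>
      simp_all [twoP2, G.adj_comm, G.irrefl]

lemma noChair {V : Type*} {G : SimpleGraph V} (h : _root_.Free chair G) {c l1 l2 p q : V}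
    (h12 : l1 ≠ l2) (h1p : l1 ≠ p) (h1q : l1 ≠ q) (h2p : l2 ≠ p) (h2q : l2 ≠ q) (hcq : c ≠ q)
    (e1 : G.Adj c l1) (e2 : G.Adj c l2) (e3 : G.Adj c p) (e4 : G.Adj p q)
    (n1 : ¬G.Adj l1 l2) (n2 : ¬G.Adj l1 p) (n3 : ¬G.Adj l1 q)
    (n4 : ¬G.Adj l2 p) (n5 : ¬G.Adj l2 q) (n6 : ¬G.Adj c q) : False := by
  have h1 := e1.ne
  have h2 := e2.ne
  have h3 := e3.ne
  have h4 := e4.ne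
  apply h.false
  refine ⟨⟨![c,l1,l2,p,q], ?_⟩, @fun i j => ?_⟩
  · intro i j hij
    fin_cases i <;> fin_cases j <;> simp_all
  · change G.Adj (![c,l1,l2,p,q] i) (![c,l1,l2,p,q] j) ↔ chair.Adj i j
    fin_cases i <;> fin_cases j <;>
      simp_all [chair, G.adj_comm, G.irrefl]

lemma third_index : ∀ i j : Fin 3, ∃ k, k ≠ i ∧ k ≠ j := by decide

lemma ncard_le_three (S : Set (Fin 3)) : S.ncard ≤ 3 := by
  have := Set.ncard_le_ncard (Set.subset_univ S) Set.finite_univ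
  simpa [Set.ncard_univ] using this

lemma ncard_le_two (S : Set (Fin 3)) (j : Fin 3) (hj : j ∉ S) : S.ncard ≤ 2 := by
  have h1 : (insert j S).ncard = S.ncard + 1 := Set.ncard_insert_of_notMem hj (Set.toFinite S)
  have h2 := ncard_le_three (insert j S)
  omega

lemma ncard_le_one (S : Set (Fin 3)) (j k : Fin 3) (hjk : j ≠ k) (hj : j ∉ S) (hk : k ∉ S) :
    S.ncard ≤ 1 := by
  have h1 : (insert k S).ncard = S.ncard + 1 := Set.ncard_insert_of_notMem hk (Set.toFinite S)
  have h2 : (insert j (insert k S)).ncard = (insert k S).ncard + 1 :=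
    Set.ncard_insert_of_notMem (by simp [hj, hjk]) (Set.toFinite _)
  have h3 := ncard_le_three (insert j (insert k S))
  omega

/-- If a vertex outside an induced net in a `(2P2, C5, S_{1,1,2})`-free graph has
exactly four neighbours among the net vertices, then it is adjacent to exactly one
end-vertex and to all three mid-vertices. -/
theorem net_four_neighbours {V : Type*} (G : SimpleGraph V)
    (h2P2 : _root_.Free twoP2 G) (hC5 : _root_.Free (cycleGraph 5) G) (hchair : _root_.Free chair G)
    (a b : Fin 3 → V)
    (hinj : Function.Injective (Sum.elim a b : Fin 3 ⊕ Fin 3 → V))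
    (hbb : ∀ i j, i ≠ j → G.Adj (b i) (b j))
    (haa : ∀ i j, ¬ G.Adj (a i) (a j))
    (hab : ∀ i j, G.Adj (a i) (b j) ↔ i = j)
    (x : V) (hx : ∀ i, x ≠ a i ∧ x ≠ b i)
    (hcount : {i | G.Adj x (a i)}.ncard + {i | G.Adj x (b i)}.ncard = 4) :
    ∃ i, (∀ j, G.Adj x (a j) ↔ j = i) ∧ ∀ j, G.Adj x (b j) := by
  classical
  have hane : ∀ i j : Fin 3, i ≠ j → a i ≠ a j := by
    intro i j hij h
    exact hij (by simpa using hinj (a₁ := Sum.inl i) (a₂ := Sum.inl j) h)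
  have habne : ∀ i j : Fin 3, a i ≠ b j := by
    intro i j h
    simpa using hinj (a₁ := Sum.inl i) (a₂ := Sum.inr j) h
  have hbne : ∀ i j : Fin 3, i ≠ j → b i ≠ b j := by
    intro i j hij h
    exact hij (by simpa using hinj (a₁ := Sum.inr i) (a₂ := Sum.inr j) h)
  have L1 : ∀ i k : Fin 3, i ≠ k → G.Adj x (a i) → ¬G.Adj x (a k) → ¬G.Adj x (b k) → False := by
    intro i k hik hai hak hbk
    exact no2P2 h2P2 (hx k).1 (hx k).2 (hane i k hik) (habne i k)
      hai ((hab k k).mpr rfl) hak hbk (haa i k)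
      (fun h => hik ((hab i k).mp h))
  have L2 : ∀ i j k : Fin 3, i ≠ j → i ≠ k → j ≠ k →
      G.Adj x (a i) → G.Adj x (a j) → G.Adj x (b k) → ¬G.Adj x (a k) → False := by
    intro i j k hij hik hjk hai haj hbk hak
    exact noChair hchair (hane i j hij) (habne i k) (hane i k hik) (habne j k) (hane j k hjk)
      (hx k).1 hai haj hbk (G.adj_symm ((hab k k).mpr rfl))
      (haa i j) (fun h => hik ((hab i k).mp h)) (haa i k)
      (fun h => hjk ((hab j k).mp h)) (haa j k) hak
  have L3 : ∀ i j k : Fin 3, i ≠ j → i ≠ k → j ≠ k →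
      G.Adj x (a i) → G.Adj x (a j) → G.Adj x (a k) → ¬G.Adj x (b j) → False := by
    intro i j k hij hik hjk hai haj hak hbj
    exact noChair hchair (hane i k hik) (hane i j hij) (habne i j) (hane k j (Ne.symm hjk))
      (habne k j) (hx j).2 hai hak haj ((hab j j).mpr rfl)
      (haa i k) (haa i j) (fun h => hij ((hab i j).mp h))
      (haa k j) (fun h => hjk (((hab k j).mp h).symm)) hbj
  set S : Set (Fin 3) := {i | G.Adj x (a i)} with hSdef
  set T : Set (Fin 3) := {i | G.Adj x (b i)} with hTdef
  have hBall : ∀ j, G.Adj x (b j) := by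
    by_contra hc
    push_neg at hc
    obtain ⟨j, hj⟩ := hc
    have hjT : j ∉ T := hj
    by_cases haj : G.Adj x (a j)
    · have hT2 : T.ncard ≤ 2 := ncard_le_two T j hjT
      have hS2 : 2 ≤ S.ncard := by omega
      have hex : ∃ i, i ≠ j ∧ G.Adj x (a i) := by
        by_contra h
        push_neg at h
        have hsub : S ⊆ {j} := by
          intro m hm
          by_contra hmj
          exact h m (by simpa using hmj) hm
        have := Set.ncard_le_ncard hsub (Set.finite_singleton j)
        rw [Set.ncard_singleton] at this
        omega
      obtain ⟨i, hij, hai⟩ := hex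
      obtain ⟨k, hki, hkj⟩ := third_index i j
      by_cases hak : G.Adj x (a k)
      · exact L3 i j k hij (Ne.symm hki) (Ne.symm hkj) hai haj hak hj
      · by_cases hbk : G.Adj x (b k)
        · exact L2 i j k hij (Ne.symm hki) (Ne.symm hkj) hai haj hbk hak
        · have hS' : S.ncard ≤ 2 := ncard_le_two S k hak
          have hT' : T.ncard ≤ 1 := ncard_le_one T j k (Ne.symm hkj) hjT hbk
          omega
    · have hT2 : T.ncard ≤ 2 := ncard_le_two T j hjT
      have hS1 : 1 ≤ S.ncard := by omega
      have hSne : S.Nonempty := by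
        rw [Set.nonempty_iff_ne_empty]
        intro h
        rw [h] at hS1
        simp at hS1
      obtain ⟨i, hi⟩ := hSne
      have hai : G.Adj x (a i) := hi
      have hij : i ≠ j := fun h => haj (h ▸ hai)
      exact L1 i j hij hai haj hj
  have hTuniv : T = Set.univ := Set.eq_univ_of_forall hBall
  have hT3 : T.ncard = 3 := by
    rw [hTuniv, Set.ncard_univ]
    simp
  have hS1 : S.ncard = 1 := by omega
  obtain ⟨i, hSi⟩ := Set.ncard_eq_one.mp hS1
  refine ⟨i, fun j => ?_, hBall⟩
  have := Set.ext_iff.mp hSi j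
  exact this
end

section
/- Let G be a chordal graph, v a vertex of G, L1 the set of neighbours of v, and suppose L1 is a clique (v is simplicial). Let s and t be vertices outside L1 ∪ {v} that are non-adjacent to each other, and suppose G is (P1 + diamond)-free, where the diamond is K4 minus an edge. If t has at least two neighbours a, b in L1 with s non-adjacent to both a and b, then the vertices s, a, b, t, v induce a P1 + diamond in G, a contradiction; hence s is adjacent to all but at most one vertex of the L1-neighbourhood of t. -/
open SimpleGraph

/-- In a `(P1+diamond)`-free chordal graph with simplicial vertex `v`, two
non-adjacent vertices `s, t` outside `N(v) ∪ {v}` cannot have two distinct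
vertices `a, b ∈ N(v)` both adjacent to `t` and both non-adjacent to `s`. -/
theorem p1DiamondFree_chordal_simplicial_claim {V : Type*} (G : SimpleGraph V)
    (hch : Chordal G) (hf : _root_.Free p1Diamond G) (v : V)
    (hsimp : G.IsClique (G.neighborSet v))
    (s t : V) (hs : s ∉ G.neighborSet v ∪ {v}) (ht : t ∉ G.neighborSet v ∪ {v})
    (hst : ¬ G.Adj s t)
    (a b : V) (ha : a ∈ G.neighborSet v) (hb : b ∈ G.neighborSet v) (hab : a ≠ b)
    (hta : G.Adj t a) (htb : G.Adj t b)
    (hsa : ¬ G.Adj s a) (hsb : ¬ G.Adj s b) :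
    False := by
  simp only [Set.mem_union, Set.mem_singleton_iff, SimpleGraph.mem_neighborSet] at hs ht
  push_neg at hs ht
  obtain ⟨hsv, hsv'⟩ := hs
  obtain ⟨htv, htv'⟩ := ht
  have hva : G.Adj v a := ha
  have hvb : G.Adj v b := hb
  have hab' : G.Adj a b := hsimp ha hb hab
  have hsna : s ≠ a := fun h => hsv (h ▸ hva)
  have hsnb : s ≠ b := fun h => hsv (h ▸ hvb)
  have hsnt : s ≠ t := fun h => hsa (h ▸ hta)
  have htna : t ≠ a := fun h => htv (h ▸ hva)
  have htnb : t ≠ b := fun h => htv (h ▸ hvb)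
  have hna : a ≠ v := fun h => G.irrefl (h ▸ hva)
  have hnb : b ≠ v := fun h => G.irrefl (h ▸ hvb)
  have hsv2 : ¬ G.Adj s v := fun h => hsv h.symm
  have htv2 : ¬ G.Adj t v := fun h => htv h.symm
  refine hf.false ⟨⟨![s, a, b, t, v], ?_⟩, ?_⟩
  · intro i j hij
    fin_cases i <;> fin_cases j <;> simp_all [Fin.ext_iff] <;>
      first
        | exact hsnt hij
        | exact hsnt hij.symm
        | exact hab hij
        | exact hab hij.symm
        | exact htna hij.symm
        | exact htnb hij.symm
        | exact hsv' hij
        | exact htv' hij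
        | exact hna hij
        | exact hnb hij
  · have hsa2 : ¬ G.Adj a s := fun h => hsa h.symm
    have hsb2 : ¬ G.Adj b s := fun h => hsb h.symm
    have hst2 : ¬ G.Adj t s := fun h => hst h.symm
    have hsv3 : ¬ G.Adj v s := hsv
    have htv3 : ¬ G.Adj v t := htv
    have hab2 : G.Adj b a := hab'.symm
    have hta2 : G.Adj a t := hta.symm
    have htb2 : G.Adj b t := htb.symm
    have hva2 : G.Adj a v := hva.symm
    have hvb2 : G.Adj b v := hvb.symm
    intro i j
    fin_cases i <;> fin_cases j <;>
      simp [p1Diamond, SimpleGraph.fromRel_adj, Fin.ext_iff, hst, hsa, hsb, hsv2, htv2,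
        hab', hta, htb, hva, hvb, hsa2, hsb2, hst2, hsv3, htv3, hab2, hta2, htb2, hva2, hvb2] <;>
      assumption
end

section
/- Let G be a split graph with split partition (C, I) where C is a clique and I an independent set. If G is (P1 + paw)-free (the paw being the complement of P1+P3), then the bipartite graph obtained from G by removing all edges inside C contains no induced P2+P4, and in particular no induced S_{1,2,3}. -/
open SimpleGraph

/-- An induced copy of `P2+P4` inside `S_{1,2,3}`: the edge `5-6` together with
the path `3-2-0-1`. -/
def p2P4EmbS123 : p2P4 ↪g s123 :=
  ⟨⟨![5,6,3,2,0,1], by decide⟩, by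
    intro a b
    simp only [p2P4, s123, SimpleGraph.fromRel_adj]
    revert a b; decide⟩

/-- If `G` is `(P1+paw)`-free then it contains no configuration of five vertices
forming a paw (triangle `a,b,d` with pendant `e` on `d`) plus an isolated vertex `o`. -/
lemma paw_contra {V : Type*} {G : SimpleGraph V} (hf : _root_.Free p1Paw G)
    (o a b d e : V)
    (hab : G.Adj a b) (had : G.Adj a d) (hbd : G.Adj b d) (hde : G.Adj d e)
    (hae : ¬G.Adj a e) (hbe : ¬G.Adj b e)
    (hoa : ¬G.Adj o a) (hob : ¬G.Adj o b) (hod : ¬G.Adj o d) (hoe : ¬G.Adj o e)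
    (noa : o ≠ a) (nob : o ≠ b) (nod : o ≠ d) (noe : o ≠ e)
    (nea : e ≠ a) (neb : e ≠ b) : False := by
  have hba := hab.symm; have hda := had.symm; have hdb := hbd.symm; have hed := hde.symm
  have nab := hab.ne; have nad := had.ne; have nbd := hbd.ne; have nde := hde.ne
  apply hf.false
  refine ⟨⟨![o,a,b,d,e], ?_⟩, ?_⟩
  · intro u v h
    fin_cases u <;> fin_cases v <;> simp_all
  · intro u v
    fin_cases u <;> fin_cases v <;>
      simp_all [p1Paw, SimpleGraph.fromRel_adj, DFunLike.coe] <;>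
      first
        | exact hae ∘ G.adj_symm | exact hbe ∘ G.adj_symm
        | exact hoa ∘ G.adj_symm | exact hob ∘ G.adj_symm
        | exact hod ∘ G.adj_symm | exact hoe ∘ G.adj_symm

set_option maxHeartbeats 1600000 in
/-- Removing the edges inside the clique of a `(P1+paw)`-free split graph yields a
bipartite graph with no induced `P2+P4`, and in particular no induced `S_{1,2,3}`. -/
theorem p1PawFree_split_complement_clique {V : Type*} (G : SimpleGraph V)
    (C I : Set V) (hcover : ∀ v, v ∈ C ∨ v ∈ I) (hdisj : ∀ v, ¬ (v ∈ C ∧ v ∈ I))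
    (hC : G.IsClique C) (hI : _root_.IsIndepSet G I) (hf : _root_.Free p1Paw G) :
    _root_.Free p2P4 (SimpleGraph.fromRel fun u v => G.Adj u v ∧ (u ∉ C ∨ v ∉ C)) ∧
    _root_.Free s123 (SimpleGraph.fromRel fun u v => G.Adj u v ∧ (u ∉ C ∨ v ∉ C)) := by
  set B := SimpleGraph.fromRel fun u v => G.Adj u v ∧ (u ∉ C ∨ v ∉ C) with hB
  -- description of B's adjacency
  have hBadj : ∀ u v, B.Adj u v ↔ (G.Adj u v ∧ (u ∉ C ∨ v ∉ C)) := by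
    intro u v
    rw [hB, SimpleGraph.fromRel_adj]
    constructor
    · rintro ⟨_, h | h⟩
      · exact h
      · exact ⟨h.1.symm, h.2.symm⟩
    · intro h; exact ⟨h.1.ne, Or.inl h⟩
  -- two vertices outside C are nonadjacent in G
  have hII : ∀ u v, u ∉ C → v ∉ C → ¬G.Adj u v := by
    intro u v hu hv hadj
    exact hI ((hcover u).resolve_left hu) ((hcover v).resolve_left hv) hadj.ne hadj
  -- a B-edge has exactly one endpoint in C
  have hedge : ∀ u v, B.Adj u v → G.Adj u v ∧ ¬(u ∈ C ∧ v ∈ C) ∧ ¬(u ∉ C ∧ v ∉ C) := by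
    intro u v h
    rw [hBadj] at h
    refine ⟨h.1, ?_, ?_⟩
    · rintro ⟨hu, hv⟩; rcases h.2 with h' | h' <;> [exact h' hu; exact h' hv]
    · rintro ⟨hu, hv⟩; exact hII u v hu hv h.1
  -- a B-nonedge with an endpoint outside C is a G-nonedge
  have hnon : ∀ u v, ¬B.Adj u v → (u ∉ C ∨ v ∉ C) → ¬G.Adj u v := by
    intro u v h hc hadj
    exact h ((hBadj u v).2 ⟨hadj, hc⟩)
  have hfreeP : _root_.Free p2P4 B := by
    constructor
    intro f
    -- adjacency pattern of the embedded p2P4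
    have hadj : ∀ a b : Fin 6, B.Adj (f a) (f b) ↔ p2P4.Adj a b := fun a b => f.map_adj_iff
    have hne : ∀ a b : Fin 6, a ≠ b → f a ≠ f b := fun a b h => fun h' => h (f.injective h')
    have nB : ∀ a b : Fin 6, ¬p2P4.Adj a b → ¬B.Adj (f a) (f b) :=
      fun a b h h' => h ((hadj a b).1 h')
    -- the four edges of the embedded P2+P4
    have e01 : B.Adj (f 0) (f 1) :=
      (hadj 0 1).2 (by simp only [p2P4, SimpleGraph.fromRel_adj]; decide)
    have e23 : B.Adj (f 2) (f 3) :=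
      (hadj 2 3).2 (by simp only [p2P4, SimpleGraph.fromRel_adj]; decide)
    have e34 : B.Adj (f 3) (f 4) :=
      (hadj 3 4).2 (by simp only [p2P4, SimpleGraph.fromRel_adj]; decide)
    have e45 : B.Adj (f 4) (f 5) :=
      (hadj 4 5).2 (by simp only [p2P4, SimpleGraph.fromRel_adj]; decide)
    obtain ⟨g01, hc01, ho01⟩ := hedge _ _ e01
    obtain ⟨g23, hc23, ho23⟩ := hedge _ _ e23
    obtain ⟨g34, hc34, ho34⟩ := hedge _ _ e34
    obtain ⟨g45, hc45, ho45⟩ := hedge _ _ e45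
    -- the needed nonedges, as nonedges of B
    have n02 : ¬B.Adj (f 0) (f 2) := nB 0 2 (by simp only [p2P4, SimpleGraph.fromRel_adj]; decide)
    have n03 : ¬B.Adj (f 0) (f 3) := nB 0 3 (by simp only [p2P4, SimpleGraph.fromRel_adj]; decide)
    have n04 : ¬B.Adj (f 0) (f 4) := nB 0 4 (by simp only [p2P4, SimpleGraph.fromRel_adj]; decide)
    have n05 : ¬B.Adj (f 0) (f 5) := nB 0 5 (by simp only [p2P4, SimpleGraph.fromRel_adj]; decide)
    have n12 : ¬B.Adj (f 1) (f 2) := nB 1 2 (by simp only [p2P4, SimpleGraph.fromRel_adj]; decide)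
    have n13 : ¬B.Adj (f 1) (f 3) := nB 1 3 (by simp only [p2P4, SimpleGraph.fromRel_adj]; decide)
    have n14 : ¬B.Adj (f 1) (f 4) := nB 1 4 (by simp only [p2P4, SimpleGraph.fromRel_adj]; decide)
    have n15 : ¬B.Adj (f 1) (f 5) := nB 1 5 (by simp only [p2P4, SimpleGraph.fromRel_adj]; decide)
    have n25 : ¬B.Adj (f 2) (f 5) := nB 2 5 (by simp only [p2P4, SimpleGraph.fromRel_adj]; decide)
    -- one endpoint of the edge f0-f1 lies outside C; call it i
    have hi : ∃ i : Fin 6, (i = 0 ∨ i = 1) ∧ f i ∉ C := by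
      by_cases h0 : f 0 ∈ C
      · exact ⟨1, Or.inr rfl, fun h1 => hc01 ⟨h0, h1⟩⟩
      · exact ⟨0, Or.inl rfl, h0⟩
    obtain ⟨i, hi01, hiC⟩ := hi
    have niB : ∀ b : Fin 6, ¬p2P4.Adj i b → ¬B.Adj (f i) (f b) := by
      rcases hi01 with h | h <;> subst h
      · exact nB 0
      · exact nB 1
    have ni2 : ¬B.Adj (f i) (f 2) := by rcases hi01 with h | h <;> subst h <;> assumption
    have ni3 : ¬B.Adj (f i) (f 3) := by rcases hi01 with h | h <;> subst h <;> assumption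
    have ni4 : ¬B.Adj (f i) (f 4) := by rcases hi01 with h | h <;> subst h <;> assumption
    have ni5 : ¬B.Adj (f i) (f 5) := by rcases hi01 with h | h <;> subst h <;> assumption
    have nei : ∀ b : Fin 6, (b = 2 ∨ b = 3 ∨ b = 4 ∨ b = 5) → f i ≠ f b := by
      intro b hb
      apply hne
      rcases hi01 with h | h <;> subst h <;> rcases hb with h | h | h | h <;> subst h <;> decide
    by_cases h3 : f 3 ∈ C
    · -- f3 ∈ C : triangle f5,f4,f3 with pendant f2 on f3, isolated f i
      have h2 : f 2 ∉ C := fun h => hc23 ⟨h, h3⟩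
      have h4 : f 4 ∉ C := fun h => hc34 ⟨h3, h⟩
      have h5 : f 5 ∈ C := by
        by_contra h5
        exact ho45 ⟨h4, h5⟩
      exact paw_contra hf (f i) (f 5) (f 4) (f 3) (f 2)
        g45.symm (hC h5 h3 (hne 5 3 (by decide))) g34.symm g23.symm
        (fun h => hnon _ _ (fun h' => n25 h'.symm) (Or.inr h2) h)
        (hII _ _ h4 h2)
        (fun h => hnon _ _ ni5 (Or.inl hiC) h)
        (hII _ _ hiC h4)
        (fun h => hnon _ _ ni3 (Or.inl hiC) h)
        (hII _ _ hiC h2)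
        (nei 5 (by decide)) (nei 4 (by decide)) (nei 3 (by decide)) (nei 2 (by decide))
        (hne 2 5 (by decide)) (hne 2 4 (by decide))
    · -- f3 ∉ C : triangle f2,f3,f4 with pendant f5 on f4, isolated f i
      have h4 : f 4 ∈ C := by
        by_contra h4
        exact ho34 ⟨h3, h4⟩
      have h2 : f 2 ∈ C := by
        by_contra h2
        exact ho23 ⟨h2, h3⟩
      have h5 : f 5 ∉ C := fun h => hc45 ⟨h4, h⟩
      exact paw_contra hf (f i) (f 2) (f 3) (f 4) (f 5)
        g23 (hC h2 h4 (hne 2 4 (by decide))) g34 g45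
        (fun h => hnon _ _ n25 (Or.inr h5) h)
        (hII _ _ h3 h5)
        (fun h => hnon _ _ ni2 (Or.inl hiC) h)
        (hII _ _ hiC h3)
        (fun h => hnon _ _ ni4 (Or.inl hiC) h)
        (hII _ _ hiC h5)
        (nei 2 (by decide)) (nei 3 (by decide)) (nei 4 (by decide)) (nei 5 (by decide))
        (hne 5 2 (by decide)) (hne 5 3 (by decide))
  refine ⟨hfreeP, ?_⟩
  constructor
  intro g
  exact hfreeP.false (g.comp p2P4EmbS123)
end
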